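/- arXiv:1905.11165 — 6 statements merged into one kernel-verified Lean document; each statement's English description precedes it below -/
import Mathlib

section
/- Let q ≥ 2 and let θ be real with √q < θ ≤ q, write θ = q^{1−1/p} with 2 < p ≤ ∞, and let λ = (θ + qθ⁻¹)/(q+1) > 0. Define λ^(k) by the explicit formula λ^(k) = (1/((q+1)q^{k−1}))·(θ^k + (qθ⁻¹)^k + (1 − q⁻¹)·∑_{i=1}^{k−1} q^i θ^{k−2i}). Then q^{−k/p} ≤ λ^(k) ≤ (k+1)·q^{−k/p}. -/
lemma stmt2_tele_aux (g : ℕ → ℝ) : ∀ n : ℕ,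
    ∑ i ∈ Finset.Icc 1 n, (g i - g (i + 1)) = g 1 - g (n + 1) := by
  intro n
  induction n with
  | zero => simp
  | succ n ih =>
    rw [Finset.sum_Icc_succ_top (by omega : 1 ≤ n + 1), ih]
    ring

set_option maxHeartbeats 1000000 in
/-- For real `θ` with `√q < θ ≤ q`, writing `θ = q^{1-1/p}` with
`2 < p ≤ ∞` (equivalently `θ = q^{1-e}` with `e = 1/p ∈ [0, 1/2)`), the eigenvalue
`λ^(k)` defined by the explicit formula satisfies `q^{-k/p} ≤ λ^(k) ≤ (k+1) q^{-k/p}`. -/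
theorem stmt2 (q : ℕ) (hq : 2 ≤ q) (θ : ℝ) (hθ1 : Real.sqrt q < θ) (hθ2 : θ ≤ q)
    (e : ℝ) (he0 : 0 ≤ e) (he1 : e < 1 / 2) (hθe : θ = (q : ℝ) ^ ((1 : ℝ) - e))
    (k : ℕ) (hk : 1 ≤ k) (lamk : ℝ)
    (hlamk : lamk = (((q : ℝ) + 1) * (q : ℝ) ^ (k - 1))⁻¹ *
      (θ ^ k + ((q : ℝ) * θ⁻¹) ^ k +
        (1 - (q : ℝ)⁻¹) * ∑ i ∈ Finset.Icc 1 (k - 1),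
          (q : ℝ) ^ i * θ ^ ((k : ℤ) - 2 * (i : ℤ)))) :
    (q : ℝ) ^ (-(k : ℝ) * e) ≤ lamk ∧ lamk ≤ ((k : ℝ) + 1) * (q : ℝ) ^ (-(k : ℝ) * e) := by
  have hc2 : (2:ℝ) ≤ (q:ℝ) := by exact_mod_cast hq
  set c : ℝ := (q:ℝ) with hc
  have hc1 : (1:ℝ) < c := by linarith
  have hc0 : (0:ℝ) < c := by linarith
  have hk1 : (1:ℝ) ≤ (k:ℝ) := by exact_mod_cast hk
  have hEpos : ∀ x : ℝ, 0 < c ^ x := fun x => Real.rpow_pos_of_pos hc0 x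
  have hEmono : ∀ {x y : ℝ}, x ≤ y → c ^ x ≤ c ^ y := fun h =>
    (Real.rpow_le_rpow_left_iff hc1).mpr h
  -- rewrite the pieces of `lamk` as rpows of `c`
  have hθk : θ ^ k = c ^ ((k:ℝ) - k*e) := by
    rw [hθe, ← Real.rpow_natCast (c ^ ((1:ℝ)-e)) k, ← Real.rpow_mul hc0.le]
    congr 1; ring
  have hθinv : (c * θ⁻¹) ^ k = c ^ (e * (k:ℝ)) := by
    have h1 : c * θ⁻¹ = c ^ e := by
      rw [hθe, ← Real.rpow_neg hc0.le]
      nth_rewrite 1 [← Real.rpow_one c]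
      rw [← Real.rpow_add hc0]; congr 1; ring
    rw [h1, ← Real.rpow_natCast (c ^ e) k, ← Real.rpow_mul hc0.le]
  set g : ℕ → ℝ := fun j => c ^ ((k:ℝ) - k*e - j*(1-2*e)) with hg
  have hterm : ∀ i : ℕ, (q:ℝ) ^ i * θ ^ ((k:ℤ) - 2*(i:ℤ)) = g i := by
    intro i
    simp only [hg]
    rw [hθe, ← Real.rpow_intCast (c ^ ((1:ℝ)-e)) _, ← Real.rpow_mul hc0.le,
      ← Real.rpow_natCast c i, ← Real.rpow_add hc0]
    congr 1; push_cast; ring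
  have hcc : ∀ x : ℝ, c * c ^ x = c ^ (x + 1) := by
    intro x
    nth_rewrite 1 [← Real.rpow_one c]
    rw [← Real.rpow_add hc0]; congr 1; ring
  have hD : ((c+1) * c ^ (k-1) : ℝ) = c ^ (k:ℝ) + c ^ ((k:ℝ)-1) := by
    rw [← Real.rpow_natCast c (k-1), Nat.cast_sub hk, Nat.cast_one, add_mul, one_mul, hcc]
    congr 2; ring
  have hfac : ∀ x : ℝ, (1 - c⁻¹) * c ^ x = c ^ x - c ^ (x - 1) := by
    intro x
    rw [sub_mul, one_mul, ← Real.rpow_neg_one c, ← Real.rpow_add hc0,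
      show (-1:ℝ) + x = x - 1 by ring]
  set S : ℝ := θ ^ k + (c * θ⁻¹) ^ k +
      (1 - c⁻¹) * ∑ i ∈ Finset.Icc 1 (k-1), (q:ℝ) ^ i * θ ^ ((k:ℤ) - 2*(i:ℤ)) with hS
  have hDpos : (0:ℝ) < (c+1) * c ^ (k-1) := by positivity
  have hlam : lamk = S / ((c+1) * c ^ (k-1)) := by rw [hlamk, hS, inv_mul_eq_div]
  have hSval : S = c ^ ((k:ℝ) - k*e) + c ^ (e*(k:ℝ)) +
      (1 - c⁻¹) * ∑ i ∈ Finset.Icc 1 (k-1), g i := by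
    rw [hS, hθk, hθinv]
    congr 2
    exact Finset.sum_congr rfl fun i _ => hterm i
  have hgk : g k = c ^ (e * (k:ℝ)) := by
    simp only [hg]; congr 1; ring
  have hg1 : g 1 = c ^ ((k:ℝ) - k*e - (1-2*e)) := by
    simp only [hg]; norm_num
  -- telescoping lower bound for the sum part
  have htel : ∑ i ∈ Finset.Icc 1 (k-1), (g i - g (i+1)) = g 1 - g k := by
    have h := stmt2_tele_aux g (k-1)
    rwa [Nat.sub_add_cancel hk] at h
  have hsumlow : g 1 - g k ≤ (1 - c⁻¹) * ∑ i ∈ Finset.Icc 1 (k-1), g i := by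
    rw [Finset.mul_sum, ← htel]
    refine Finset.sum_le_sum fun i _ => ?_
    show g i - g (i+1) ≤ (1 - c⁻¹) * g i
    simp only [hg]
    rw [hfac]
    refine sub_le_sub_left (hEmono ?_) _
    push_cast; nlinarith
  constructor
  · rw [hlam, le_div_iff₀ hDpos, hD, mul_add, ← Real.rpow_add hc0, ← Real.rpow_add hc0, hSval]
    have h1 : c ^ (-(k:ℝ)*e + (k:ℝ)) = c ^ ((k:ℝ) - k*e) := by
      rw [show -(k:ℝ)*e + (k:ℝ) = (k:ℝ) - k*e by ring]
    have h2 : c ^ (-(k:ℝ)*e + ((k:ℝ)-1)) ≤ g 1 := by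
      rw [hg1]; exact hEmono (by nlinarith)
    rw [h1]
    have h3 := hsumlow
    rw [hgk] at h3
    linarith
  · rw [hlam, div_le_iff₀ hDpos, hD, hSval]
    have hsumup : ∑ i ∈ Finset.Icc 1 (k-1), g i ≤ ((k:ℝ) - 1) * c ^ ((k:ℝ) - k*e) := by
      calc ∑ i ∈ Finset.Icc 1 (k-1), g i
          ≤ ∑ _i ∈ Finset.Icc 1 (k-1), c ^ ((k:ℝ) - k*e) := by
            refine Finset.sum_le_sum fun i hi => ?_
            simp only [hg]
            refine hEmono ?_
            have hi1 : 1 ≤ i := (Finset.mem_Icc.mp hi).1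
            have : (1:ℝ) ≤ (i:ℝ) := by exact_mod_cast hi1
            nlinarith
        _ = ((k-1 : ℕ):ℝ) * c ^ ((k:ℝ) - k*e) := by
            rw [Finset.sum_const, Nat.card_Icc, nsmul_eq_mul]
            norm_num
        _ = ((k:ℝ) - 1) * c ^ ((k:ℝ) - k*e) := by
            rw [Nat.cast_sub hk, Nat.cast_one]
    have hmul : (1 - c⁻¹) * ∑ i ∈ Finset.Icc 1 (k-1), g i ≤
        ((k:ℝ) - 1) * c ^ ((k:ℝ) - k*e) := by
      have hpos : (0:ℝ) ≤ ∑ i ∈ Finset.Icc 1 (k-1), g i :=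
        Finset.sum_nonneg fun i _ => by simp only [hg]; exact (hEpos _).le
      have h01 : 1 - c⁻¹ ≤ 1 := by
        have : (0:ℝ) < c⁻¹ := by positivity
        linarith
      calc (1 - c⁻¹) * ∑ i ∈ Finset.Icc 1 (k-1), g i
          ≤ 1 * ∑ i ∈ Finset.Icc 1 (k-1), g i := mul_le_mul_of_nonneg_right h01 hpos
        _ = ∑ i ∈ Finset.Icc 1 (k-1), g i := one_mul _
        _ ≤ ((k:ℝ) - 1) * c ^ ((k:ℝ) - k*e) := hsumup
    have h2 : c ^ (e*(k:ℝ)) ≤ c ^ ((k:ℝ) - k*e) := hEmono (by nlinarith)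
    have hR : ((k:ℝ)+1) * c ^ (-(k:ℝ)*e) * (c ^ (k:ℝ) + c ^ ((k:ℝ)-1)) =
        ((k:ℝ)+1) * (c ^ ((k:ℝ) - k*e) + c ^ ((k:ℝ) - 1 - k*e)) := by
      rw [mul_assoc, mul_add, ← Real.rpow_add hc0, ← Real.rpow_add hc0]
      ring_nf
    rw [hR]
    set X := c ^ ((k:ℝ) - k*e) with hX
    set Y := c ^ ((k:ℝ) - 1 - k*e) with hY
    have hYpos : (0:ℝ) < Y := hEpos _
    nlinarith [hmul, h2, mul_nonneg (show (0:ℝ) ≤ (k:ℝ)+1 by linarith) hYpos.le]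
end

section
/- Let X be a finite (q+1)-regular non-bipartite Ramanujan graph on n vertices (every eigenvalue λ ≠ 1 of the normalized adjacency operator satisfies |λ| ≤ 2√q/(q+1)). Then for every ε > 0 and every vertex x₀, the number of vertices y with d(x₀,y) > (1+ε)·log_q(n) is o_ε(n) as n → ∞. -/
open scoped Classical
open Filter

noncomputable def cheb (q : ℝ) : ℕ → ℝ → ℝ
  | 0 => fun _ => 1
  | 1 => fun x => x
  | (k+2) => fun x => x * cheb q (k+1) x - q * cheb q k x

lemma cheb_zero (q x : ℝ) : cheb q 0 x = 1 := rfl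
lemma cheb_one (q x : ℝ) : cheb q 1 x = x := rfl
lemma cheb_add_two (q x : ℝ) (k : ℕ) :
    cheb q (k+2) x = x * cheb q (k+1) x - q * cheb q k x := rfl

/-- |sin (n θ)| ≤ n |sin θ| -/
lemma abs_sin_nat_mul_le (n : ℕ) (θ : ℝ) : |Real.sin (n * θ)| ≤ n * |Real.sin θ| := by
  induction n with
  | zero => simp
  | succ n ih =>
    have h : ((n:ℝ)+1) * θ = n * θ + θ := by ring
    rw [Nat.cast_succ, h, Real.sin_add]
    calc |Real.sin (n*θ) * Real.cos θ + Real.cos (n*θ) * Real.sin θ|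
        ≤ |Real.sin (n*θ) * Real.cos θ| + |Real.cos (n*θ) * Real.sin θ| := abs_add_le _ _
      _ ≤ |Real.sin (n*θ)| * 1 + 1 * |Real.sin θ| := by
          rw [abs_mul, abs_mul]
          gcongr <;> first | exact Real.abs_cos_le_one _ | exact abs_nonneg _
      _ ≤ n * |Real.sin θ| + 1 * |Real.sin θ| := by
          rw [mul_one]; gcongr
      _ = ((n:ℝ)+1) * |Real.sin θ| := by ring

lemma cheb_sin_identity (q : ℝ) (hq : 0 ≤ q) (k : ℕ) (θ : ℝ) :
    cheb q k (2 * Real.sqrt q * Real.cos θ) * Real.sin θ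
      = (Real.sqrt q)^k * Real.sin (((k:ℝ)+1) * θ) := by
  set s := Real.sqrt q with hs
  have hs2 : s^2 = q := Real.sq_sqrt hq
  induction k using Nat.strong_induction_on with
  | _ k ih =>
    match k with
    | 0 => simp [cheb_zero]
    | 1 =>
      rw [cheb_one]
      have h : (((1:ℕ):ℝ)+1) * θ = 2 * θ := by push_cast; ring
      rw [h, Real.sin_two_mul]
      ring
    | (k+2) =>
      have h1 := ih (k+1) (by omega)
      have h0 := ih k (by omega)
      rw [cheb_add_two]
      have key : Real.sin (((k:ℝ)+2+1) * θ)
          = 2 * Real.cos θ * Real.sin (((k:ℝ)+1+1) * θ) - Real.sin (((k:ℝ)+1) * θ) := by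
        have e1 : ((k:ℝ)+2+1) * θ = ((k:ℝ)+1+1) * θ + θ := by ring
        have e2 : ((k:ℝ)+1) * θ = ((k:ℝ)+1+1) * θ - θ := by ring
        rw [e1, e2, Real.sin_add, Real.sin_sub]
        ring
      push_cast at h1 h0 ⊢
      linear_combination (2*s*Real.cos θ)*h1 - q*h0 - s^(k+2)*key
        + s^k * Real.sin (((k:ℝ)+1)*θ) * hs2

lemma cheb_at_two_sqrt (q : ℝ) (hq : 0 ≤ q) (k : ℕ) :
    cheb q k (2 * Real.sqrt q) = ((k:ℝ)+1) * (Real.sqrt q)^k := by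
  set s := Real.sqrt q with hs
  have hs2 : s^2 = q := Real.sq_sqrt hq
  induction k using Nat.strong_induction_on with
  | _ k ih =>
    match k with
    | 0 => simp [cheb_zero]
    | 1 => rw [cheb_one]; push_cast; ring
    | (k+2) =>
      have h1 := ih (k+1) (by omega)
      have h0 := ih k (by omega)
      rw [cheb_add_two, h1, h0, ← hs2]
      push_cast
      ring

lemma cheb_at_neg_two_sqrt (q : ℝ) (hq : 0 ≤ q) (k : ℕ) :
    cheb q k (-(2 * Real.sqrt q)) = (-1)^k * (((k:ℝ)+1) * (Real.sqrt q)^k) := by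
  set s := Real.sqrt q with hs
  have hs2 : s^2 = q := Real.sq_sqrt hq
  induction k using Nat.strong_induction_on with
  | _ k ih =>
    match k with
    | 0 => simp [cheb_zero]
    | 1 => rw [cheb_one]; push_cast; ring
    | (k+2) =>
      have h1 := ih (k+1) (by omega)
      have h0 := ih k (by omega)
      rw [cheb_add_two, h1, h0, ← hs2]
      push_cast
      ring

/-- Main analytic bound: on `[-2√q, 2√q]`, `|cheb q k| ≤ (k+1) q^{k/2}`. -/
lemma abs_cheb_le (q : ℝ) (hq : 0 < q) (k : ℕ) (x : ℝ)
    (hx : |x| ≤ 2 * Real.sqrt q) :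
    |cheb q k x| ≤ ((k:ℝ)+1) * (Real.sqrt q)^k := by
  set s := Real.sqrt q with hs
  have hspos : 0 < s := Real.sqrt_pos.mpr hq
  have h2s : 0 < 2 * s := by positivity
  set c := x / (2 * s) with hc
  have hc1 : -1 ≤ c := by
    rw [hc, le_div_iff₀ h2s]
    nlinarith [neg_abs_le x]
  have hc2 : c ≤ 1 := by
    rw [hc, div_le_iff₀ h2s]
    nlinarith [le_abs_self x]
  have hxc : x = 2 * s * c := by rw [hc, mul_div_assoc', mul_div_cancel_left₀ x h2s.ne']
  set θ := Real.arccos c with hθ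
  have hcos : Real.cos θ = c := Real.cos_arccos hc1 hc2
  have hsin : Real.sin θ = Real.sqrt (1 - c^2) := Real.sin_arccos c
  by_cases hcc : c^2 = 1
  · -- endpoint case: c = 1 or c = -1
    have hcv : c = 1 ∨ c = -1 := by
      rcases mul_eq_zero.mp (show (c-1)*(c+1) = 0 by nlinarith) with h|h
      · left; linarith
      · right; linarith
    rcases hcv with h | h
    · have hx2 : x = 2*s := by rw [hxc, h]; ring
      rw [hx2, cheb_at_two_sqrt q hq.le, abs_of_nonneg (by positivity)]
    · have hx2 : x = -(2*s) := by rw [hxc, h]; ring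
      rw [hx2, cheb_at_neg_two_sqrt q hq.le, abs_mul, abs_pow, abs_neg, abs_one,
        one_pow, one_mul, abs_of_nonneg (by positivity)]
  · have hcclt : c^2 < 1 := lt_of_le_of_ne (by nlinarith) hcc
    have hsinpos : 0 < Real.sin θ := by
      rw [hsin]
      exact Real.sqrt_pos.mpr (by linarith)
    have hid := cheb_sin_identity q hq.le k θ
    rw [← hcos] at hxc
    rw [← hxc] at hid
    have hb : |Real.sin (((k:ℝ)+1) * θ)| ≤ ((k:ℝ)+1) * |Real.sin θ| := by
      have := abs_sin_nat_mul_le (k+1) θ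
      push_cast at this
      convert this using 3 <;> push_cast <;> ring
    have habs : |cheb q k x| * Real.sin θ ≤ s^k * (((k:ℝ)+1) * |Real.sin θ|) := by
      calc |cheb q k x| * Real.sin θ = |cheb q k x * Real.sin θ| := by
            rw [abs_mul, abs_of_pos hsinpos]
        _ = |s^k * Real.sin (((k:ℝ)+1) * θ)| := by rw [hid]
        _ = s^k * |Real.sin (((k:ℝ)+1) * θ)| := by
            rw [abs_mul, abs_of_pos (pow_pos hspos k)]
        _ ≤ s^k * (((k:ℝ)+1) * |Real.sin θ|) := by
            gcongr
    rw [abs_of_pos hsinpos] at habs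
    have := le_of_mul_le_mul_right (by linarith [habs] : |cheb q k x| * Real.sin θ ≤ (((k:ℝ)+1) * s^k) * Real.sin θ) hsinpos
    exact this

open Finset Matrix

lemma cheb_val_aux (q : ℝ) (hq : 1 ≤ q) (k : ℕ) :
    q^k ≤ cheb q k (q+1) ∧ cheb q (k+1) (q+1) = q * cheb q k (q+1) + 1 := by
  induction k with
  | zero => constructor <;> simp [cheb_zero, cheb_one]
  | succ k ih =>
    obtain ⟨h1, h2⟩ := ih
    constructor
    · rw [h2]
      have : q * q^k ≤ q * cheb q k (q+1) := by
        apply mul_le_mul_of_nonneg_left h1 (by linarith)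
      calc q^(k+1) = q * q^k := by ring
        _ ≤ q * cheb q k (q+1) := this
        _ ≤ q * cheb q k (q+1) + 1 := by linarith
    · rw [cheb_add_two, h2]
      ring

lemma cheb_q_add_one_ge (q : ℝ) (hq : 1 ≤ q) (k : ℕ) : q^k ≤ cheb q k (q+1) :=
  (cheb_val_aux q hq k).1

noncomputable section

variable {V : Type} [Fintype V] [DecidableEq V]

/-- matrix version of the Chebyshev-like recursion -/
def chebM (q : ℝ) (A : Matrix V V ℝ) : ℕ → Matrix V V ℝ
  | 0 => 1
  | 1 => A
  | (k+2) => A * chebM q A (k+1) - q • chebM q A k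

lemma chebM_zero (q : ℝ) (A : Matrix V V ℝ) : chebM q A 0 = 1 := rfl
lemma chebM_one (q : ℝ) (A : Matrix V V ℝ) : chebM q A 1 = A := rfl
lemma chebM_add_two (q : ℝ) (A : Matrix V V ℝ) (k : ℕ) :
    chebM q A (k+2) = A * chebM q A (k+1) - q • chebM q A k := rfl

lemma chebM_mulVec (q : ℝ) (A : Matrix V V ℝ) (lam : ℝ) (v : V → ℝ)
    (hv : A *ᵥ v = lam • v) (k : ℕ) :
    chebM q A k *ᵥ v = cheb q k lam • v := by
  induction k using Nat.strong_induction_on with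
  | _ k ih =>
    match k with
    | 0 => simp [chebM_zero, cheb_zero]
    | 1 => simpa [chebM_one, cheb_one] using hv
    | (k+2) =>
      have h1 := ih (k+1) (by omega)
      have h0 := ih k (by omega)
      rw [chebM_add_two, cheb_add_two, Matrix.sub_mulVec, ← Matrix.mulVec_mulVec, h1,
        Matrix.mulVec_smul, hv, Matrix.smul_mulVec, h0, smul_smul, smul_smul, sub_smul,
        mul_comm]

variable (G : SimpleGraph V) [DecidableRel G.Adj]

lemma chebM_support (q : ℝ) (hconn : G.Connected) (k : ℕ) :
    ∀ x y : V, k < G.dist x y → chebM q (G.adjMatrix ℝ) k x y = 0 := by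
  induction k using Nat.strong_induction_on with
  | _ k ih =>
    match k with
    | 0 =>
      intro x y h
      have hxy : x ≠ y := by
        rintro rfl; simp [SimpleGraph.dist_self] at h
      simp [chebM_zero, Matrix.one_apply_ne hxy]
    | 1 =>
      intro x y h
      have : ¬ G.Adj x y := by
        intro hadj
        have := (SimpleGraph.dist_eq_one_iff_adj).mpr hadj
        omega
      simp [chebM_one, this]
    | (k+2) =>
      intro x y h
      rw [chebM_add_two, Matrix.sub_apply, Matrix.smul_apply, Matrix.mul_apply]
      have hz : ∀ z : V, G.adjMatrix ℝ x z * chebM q (G.adjMatrix ℝ) (k+1) z y = 0 := by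
        intro z
        by_cases hadj : G.Adj x z
        · have hd : k + 1 < G.dist z y := by
            have ht := hconn.dist_triangle (u := x) (v := z) (w := y)
            have hxz : G.dist x z = 1 := SimpleGraph.dist_eq_one_iff_adj.mpr hadj
            omega
          rw [ih (k+1) (by omega) z y hd, mul_zero]
        · simp [hadj]
      rw [Finset.sum_eq_zero (fun z _ => hz z), ih k (by omega) x y (by omega)]
      simp

lemma chebM_isSymm (q : ℝ) (A : Matrix V V ℝ) (hA : A.IsSymm) (k : ℕ) :
    (chebM q A k).IsSymm ∧ A * chebM q A k = chebM q A k * A := by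
  induction k using Nat.strong_induction_on with
  | _ k ih =>
    match k with
    | 0 => simp [chebM_zero, Matrix.isSymm_one]
    | 1 => simp [chebM_one, hA]
    | (k+2) =>
      obtain ⟨hs1, hc1⟩ := ih (k+1) (by omega)
      obtain ⟨hs0, hc0⟩ := ih k (by omega)
      constructor
      · rw [chebM_add_two]
        apply Matrix.IsSymm.sub
        · rw [Matrix.IsSymm, Matrix.transpose_mul, hs1, hA, hc1]
        · exact hs0.smul q
      · rw [chebM_add_two, Matrix.mul_sub, Matrix.sub_mul, Matrix.mul_smul, Matrix.smul_mul,
          hc0, Matrix.mul_assoc, hc1, ← Matrix.mul_assoc]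

end

open Finset Matrix

noncomputable section

variable {V : Type} [Fintype V] [DecidableEq V]

omit [DecidableEq V] in
lemma eigen_const (G : SimpleGraph V) [DecidableRel G.Adj] (hconn : G.Connected)
    {d : ℕ} (hreg : G.IsRegularOfDegree d) (f : V → ℝ)
    (hf : ∀ x, ∑ y ∈ G.neighborFinset x, f y = (d : ℝ) * f x) :
    ∃ c : ℝ, ∀ x, f x = c := by
  have hne : Nonempty V := hconn.nonempty
  obtain ⟨x₀, -, hmax⟩ := Finset.exists_max_image Finset.univ f
    ⟨Classical.arbitrary V, Finset.mem_univ _⟩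
  refine ⟨f x₀, ?_⟩
  have step : ∀ z w : V, G.Adj z w → f z = f x₀ → f w = f x₀ := by
    intro z w hzw hz
    have hcard : (G.neighborFinset z).card = d := hreg z
    have hsum : ∑ y ∈ G.neighborFinset z, (f x₀ - f y) = 0 := by
      rw [Finset.sum_sub_distrib, hf z, hz, Finset.sum_const, hcard, nsmul_eq_mul, sub_self]
    have hnn : ∀ y ∈ G.neighborFinset z, 0 ≤ f x₀ - f y :=
      fun y _ => sub_nonneg.mpr (hmax y (Finset.mem_univ y))
    have hw := (Finset.sum_eq_zero_iff_of_nonneg hnn).mp hsum w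
      (by rwa [SimpleGraph.mem_neighborFinset])
    linarith
  intro y
  have key : ∀ {a b : V} (_ : G.Walk a b), f a = f x₀ → f b = f x₀ := by
    intro a b p
    induction p with
    | nil => exact id
    | cons h p ih => exact fun ha => ih (step _ _ h ha)
  obtain ⟨p⟩ := hconn.preconnected x₀ y
  exact key p rfl

lemma spectral_bound (q : ℕ) (hq : 2 ≤ q) (G : SimpleGraph V) [DecidableRel G.Adj]
    (hreg : G.IsRegularOfDegree (q + 1)) (hconn : G.Connected)
    (hram : ∀ (μ : ℝ) (f : V → ℝ), f ≠ 0 →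
      (∀ x, ∑ y ∈ G.neighborFinset x, f y = ((q : ℝ) + 1) * μ * f x) →
      μ = 1 ∨ |μ| ≤ 2 * Real.sqrt q / ((q : ℝ) + 1))
    (u : V → ℝ) (hu : ∑ z, u z = 0) (k : ℕ) :
    ∑ y, ((chebM (q : ℝ) (G.adjMatrix ℝ) k *ᵥ u) y)^2
      ≤ (((k:ℝ)+1) * (Real.sqrt q)^k)^2 * ∑ y, (u y)^2 := by
  set A := G.adjMatrix ℝ with hAdef
  have hq1 : (1:ℝ) ≤ (q:ℝ) := by exact_mod_cast Nat.one_le_of_lt hq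
  have hqpos : (0:ℝ) < (q:ℝ) := by linarith
  have hq1pos : (0:ℝ) < (q:ℝ) + 1 := by linarith
  set M := (((k:ℝ)+1) * (Real.sqrt q)^k) with hM
  have hMnn : 0 ≤ M := by positivity
  have hAsymm : A.IsSymm := SimpleGraph.isSymm_adjMatrix G
  have hA : A.IsHermitian := by
    rw [Matrix.IsHermitian]
    ext i j
    simp only [Matrix.conjTranspose_apply, star_trivial]
    exact congrFun (congrFun hAsymm i) j
  set b := hA.eigenvectorBasis with hb
  set ev := hA.eigenvalues with hev
  -- plain-function versions of the eigenvectors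
  set bb : V → V → ℝ := fun i y => b i y with hbb
  have hbev : ∀ i : V, A *ᵥ bb i = ev i • bb i := fun i => hA.mulVec_eigenvectorBasis i
  have hlhs : ∀ (f : V → ℝ) (x : V), (A *ᵥ f) x = ∑ y ∈ G.neighborFinset x, f y :=
    fun f x => G.adjMatrix_mulVec_apply x f
  have hsum_eq : ∀ (i : V) (x : V),
      ∑ y ∈ G.neighborFinset x, bb i y = ev i * bb i x := by
    intro i x
    have h3 := congrFun (hbev i) x
    rw [hlhs] at h3
    exact h3
  have hevalt : ∀ i : V, ev i = (q:ℝ)+1 ∨ |ev i| ≤ 2 * Real.sqrt q := by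
    intro i
    have hfne : bb i ≠ 0 := by
      intro h0
      exact b.orthonormal.ne_zero i (by ext x; exact congrFun h0 x)
    have heq : ∀ x, ∑ y ∈ G.neighborFinset x, bb i y
        = ((q:ℝ)+1) * (ev i / ((q:ℝ)+1)) * bb i x := by
      intro x
      rw [hsum_eq i x]
      field_simp
    rcases hram (ev i / ((q:ℝ)+1)) (bb i) hfne heq with h | h
    · left
      field_simp at h
      linarith
    · right
      rw [abs_div, abs_of_pos hq1pos, div_le_div_iff_of_pos_right hq1pos] at h
      exact h
  -- inner product formula
  have hinner_eq : ∀ f g : V → ℝ,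
      inner (𝕜 := ℝ) (show EuclideanSpace ℝ V from WithLp.toLp 2 f) (show EuclideanSpace ℝ V from WithLp.toLp 2 g)
        = ∑ x, f x * g x := by
    intro f g
    simp [PiLp.inner_apply, RCLike.inner_apply, starRingEnd_apply, mul_comm]
  let u'' : EuclideanSpace ℝ V := WithLp.toLp 2 u
  let w'' : EuclideanSpace ℝ V := WithLp.toLp 2 (chebM (q:ℝ) A k *ᵥ u)
  have hinneru : ∀ i : V, inner (𝕜 := ℝ) (b i) u'' = ∑ x, bb i x * u x :=
    fun i => hinner_eq (bb i) u
  have hinnerzero : ∀ i : V, ev i = (q:ℝ)+1 → inner (𝕜 := ℝ) (b i) u'' = 0 := by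
    intro i hi
    have hconst : ∃ c : ℝ, ∀ x, bb i x = c := by
      apply eigen_const G hconn hreg
      intro x
      rw [hsum_eq i x, hi]
      push_cast
      ring
    obtain ⟨c, hc⟩ := hconst
    rw [hinneru i]
    calc ∑ x, bb i x * u x = c * ∑ x, u x := by
          rw [Finset.mul_sum]
          exact Finset.sum_congr rfl (fun x _ => by rw [hc x])
      _ = 0 := by rw [hu, mul_zero]
  have hsymmM : ((chebM (q:ℝ) A k)).IsSymm := (chebM_isSymm (q:ℝ) A hAsymm k).1
  have hsymape : ∀ a c : V, chebM (q:ℝ) A k a c = chebM (q:ℝ) A k c a := by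
    intro a c
    conv_lhs => rw [← hsymmM]
    exact Matrix.transpose_apply _ a c
  have hMf : ∀ i : V, chebM (q:ℝ) A k *ᵥ bb i = cheb (q:ℝ) k (ev i) • bb i :=
    fun i => chebM_mulVec (q:ℝ) A (ev i) (bb i) (hbev i) k
  have hMfz : ∀ (i z : V), ∑ x, chebM (q:ℝ) A k z x * bb i x
      = cheb (q:ℝ) k (ev i) * bb i z := by
    intro i z
    have h4 := congrFun (hMf i) z
    simpa [Matrix.mulVec, dotProduct, Pi.smul_apply, smul_eq_mul] using h4
  have hinnerw : ∀ i : V,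
      inner (𝕜 := ℝ) (b i) w'' = cheb (q:ℝ) k (ev i) * inner (𝕜 := ℝ) (b i) u'' := by
    intro i
    calc inner (𝕜 := ℝ) (b i) w''
        = ∑ x, bb i x * (chebM (q:ℝ) A k *ᵥ u) x := hinner_eq (bb i) _
      _ = ∑ x, ∑ z, bb i x * (chebM (q:ℝ) A k x z * u z) := by
          refine Finset.sum_congr rfl (fun x _ => ?_)
          rw [Matrix.mulVec, dotProduct, Finset.mul_sum]
      _ = ∑ z, ∑ x, bb i x * (chebM (q:ℝ) A k x z * u z) := Finset.sum_comm
      _ = ∑ z, (∑ x, chebM (q:ℝ) A k z x * bb i x) * u z := by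
          refine Finset.sum_congr rfl (fun z _ => ?_)
          rw [Finset.sum_mul]
          refine Finset.sum_congr rfl (fun x _ => ?_)
          rw [hsymape z x]
          ring
      _ = ∑ z, (cheb (q:ℝ) k (ev i) * bb i z) * u z := by
          refine Finset.sum_congr rfl (fun z _ => ?_)
          rw [hMfz i z]
      _ = cheb (q:ℝ) k (ev i) * ∑ z, bb i z * u z := by
          rw [Finset.mul_sum]
          exact Finset.sum_congr rfl (fun z _ => by ring)
      _ = cheb (q:ℝ) k (ev i) * inner (𝕜 := ℝ) (b i) u'' := by rw [hinneru i]
  have hPar : ∀ v : EuclideanSpace ℝ V,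
      inner (𝕜 := ℝ) v v = ∑ i, inner (𝕜 := ℝ) (b i) v * inner (𝕜 := ℝ) (b i) v := by
    intro v
    rw [← b.sum_inner_mul_inner v v]
    exact Finset.sum_congr rfl (fun i _ => by rw [real_inner_comm v (b i)])
  have main : inner (𝕜 := ℝ) w'' w'' ≤ M^2 * inner (𝕜 := ℝ) u'' u'' := by
    rw [hPar w'', hPar u'', Finset.mul_sum]
    apply Finset.sum_le_sum
    intro i _
    rcases hevalt i with h | h
    · rw [hinnerw i, hinnerzero i h, mul_zero, mul_zero, mul_zero]
    · rw [hinnerw i]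
      have hbd : |cheb (q:ℝ) k (ev i)| ≤ M := abs_cheb_le (q:ℝ) hqpos k _ h
      have h1 : cheb (q:ℝ) k (ev i) * inner (𝕜 := ℝ) (b i) u''
          * (cheb (q:ℝ) k (ev i) * inner (𝕜 := ℝ) (b i) u'')
          = (cheb (q:ℝ) k (ev i))^2
            * (inner (𝕜 := ℝ) (b i) u'' * inner (𝕜 := ℝ) (b i) u'') := by
        ring
      rw [h1]
      have h2 : (cheb (q:ℝ) k (ev i))^2 ≤ M^2 := by
        rw [← sq_abs]
        exact pow_le_pow_left₀ (abs_nonneg _) hbd 2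
      have h3 : 0 ≤ inner (𝕜 := ℝ) (b i) u'' * inner (𝕜 := ℝ) (b i) u'' := mul_self_nonneg _
      exact mul_le_mul_of_nonneg_right h2 h3
  have hww : inner (𝕜 := ℝ) w'' w'' = ∑ y, ((chebM (q:ℝ) A k *ᵥ u) y)^2 := by
    calc inner (𝕜 := ℝ) w'' w''
        = ∑ y, (chebM (q:ℝ) A k *ᵥ u) y * (chebM (q:ℝ) A k *ᵥ u) y := hinner_eq _ _
      _ = ∑ y, ((chebM (q:ℝ) A k *ᵥ u) y)^2 :=
          Finset.sum_congr rfl (fun y _ => (sq _).symm)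
  have huu : inner (𝕜 := ℝ) u'' u'' = ∑ y, (u y)^2 := by
    calc inner (𝕜 := ℝ) u'' u'' = ∑ y, u y * u y := hinner_eq _ _
      _ = ∑ y, (u y)^2 := Finset.sum_congr rfl (fun y _ => (sq _).symm)
  rw [← hww, ← huu]
  exact main

end

open Finset Matrix

noncomputable section

variable {V : Type} [Fintype V] [DecidableEq V]

lemma count_le (q : ℕ) (hq : 2 ≤ q) (G : SimpleGraph V) [DecidableRel G.Adj]
    (hreg : G.IsRegularOfDegree (q + 1)) (hconn : G.Connected)
    (hram : ∀ (μ : ℝ) (f : V → ℝ), f ≠ 0 →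
      (∀ x, ∑ y ∈ G.neighborFinset x, f y = ((q : ℝ) + 1) * μ * f x) →
      μ = 1 ∨ |μ| ≤ 2 * Real.sqrt q / ((q : ℝ) + 1))
    (k : ℕ) (x : V) :
    ((Finset.univ.filter fun y => k < G.dist x y).card : ℝ) * ((q:ℝ)^k)^2
      ≤ ((Fintype.card V : ℝ))^2 * (((k:ℝ)+1) * Real.sqrt q ^ k)^2 := by
  have hq1 : (1:ℝ) ≤ (q:ℝ) := by exact_mod_cast Nat.one_le_of_lt hq
  set A := G.adjMatrix ℝ with hAdef
  set n : ℝ := (Fintype.card V : ℝ) with hn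
  have hne : Nonempty V := hconn.nonempty
  have hn1 : 1 ≤ n := by
    rw [hn]
    exact_mod_cast Fintype.card_pos
  have hnpos : 0 < n := by linarith
  set M := (((k:ℝ)+1) * (Real.sqrt q)^k) with hM
  have hMnn : 0 ≤ M := by positivity
  set c₀ := cheb (q:ℝ) k ((q:ℝ)+1) with hc₀
  have hchebge : (q:ℝ)^k ≤ c₀ := cheb_q_add_one_ge (q:ℝ) hq1 k
  have hqk : (0:ℝ) < (q:ℝ)^k := by positivity
  set u : V → ℝ := fun z => (if z = x then (1:ℝ) else 0) - 1/n with hudef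
  have hsum_delta : ∑ z, (if z = x then (1:ℝ) else 0) = 1 := by simp
  have hconstsum : ∑ _z : V, (1/n : ℝ) = n * (1/n) := by
    rw [Finset.sum_const, Finset.card_univ, nsmul_eq_mul, hn]
  have hu : ∑ z, u z = 0 := by
    rw [hudef]
    rw [Finset.sum_sub_distrib, hsum_delta, hconstsum]
    field_simp
    norm_num
  have husq : ∑ z, (u z)^2 ≤ 1 := by
    have expand : ∀ z, (u z)^2
        = (if z = x then (1:ℝ) else 0) * (1 - 2*(1/n)) + (1/n)^2 := by
      intro z
      rw [hudef]
      by_cases h : z = x <;> simp [h] <;> ring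
    calc ∑ z, (u z)^2 = ∑ z, ((if z = x then (1:ℝ) else 0) * (1 - 2*(1/n)) + (1/n)^2) :=
          Finset.sum_congr rfl (fun z _ => expand z)
      _ = (1 - 2*(1/n)) + n * (1/n)^2 := by
          rw [Finset.sum_add_distrib, ← Finset.sum_mul, hsum_delta, one_mul,
            Finset.sum_const, Finset.card_univ, nsmul_eq_mul, hn]
      _ ≤ 1 := by
          have h1 : (1:ℝ)/n ≤ 1 := by
            rw [div_le_one hnpos]; exact hn1
          have h2 : n * (1/n)^2 = 1/n := by
            field_simp
            try ring
          have h3 : (0:ℝ) < 1/n := by positivity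
          rw [h2]
          linarith
  have hspec := spectral_bound q hq G hreg hconn hram u hu k
  set w := chebM (q:ℝ) A k *ᵥ u with hwdef
  have hones : A *ᵥ (fun _ => (1:ℝ)) = ((q:ℝ)+1) • (fun _ => (1:ℝ)) := by
    funext z
    rw [hAdef, G.adjMatrix_mulVec_apply, Finset.sum_const,
      SimpleGraph.card_neighborFinset_eq_degree, hreg z, nsmul_eq_mul, Pi.smul_apply,
      smul_eq_mul]
    push_cast
    ring
  have hcheb1 : chebM (q:ℝ) A k *ᵥ (fun _ => (1:ℝ)) = c₀ • (fun _ => (1:ℝ)) :=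
    chebM_mulVec (q:ℝ) A ((q:ℝ)+1) _ hones k
  have hdelta : ∀ y : V,
      (chebM (q:ℝ) A k *ᵥ (fun z => if z = x then (1:ℝ) else 0)) y
        = chebM (q:ℝ) A k y x := by
    intro y
    rw [Matrix.mulVec, dotProduct]
    simp [mul_ite, mul_one, mul_zero]
  have hfar : ∀ y, k < G.dist x y → w y = -(c₀ / n) := by
    intro y hy
    have hu_eq : u = (fun z => if z = x then (1:ℝ) else 0) - (fun _ => 1/n) := rfl
    have hgs : (fun _ : V => 1/n) = (1/n) • (fun _ : V => (1:ℝ)) := by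
      funext z; simp
    rw [hwdef, hu_eq, Matrix.mulVec_sub, Pi.sub_apply, hdelta y]
    have hzero : chebM (q:ℝ) A k y x = 0 := by
      apply chebM_support G (q:ℝ) hconn k y x
      rwa [SimpleGraph.dist_comm]
    rw [hzero, hgs, Matrix.mulVec_smul, hcheb1]
    simp
    ring
  set S := Finset.univ.filter (fun y => k < G.dist x y) with hS
  have hcount : (S.card : ℝ) * (c₀ / n)^2 ≤ ∑ y, (w y)^2 := by
    have hsub : ∑ y ∈ S, (w y)^2 = (S.card : ℝ) * (c₀ / n)^2 := by
      rw [Finset.sum_congr rfl (fun y hy => show (w y)^2 = (c₀/n)^2 by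
        rw [hfar y (Finset.mem_filter.mp hy).2, neg_sq])]
      rw [Finset.sum_const, nsmul_eq_mul]
    rw [← hsub]
    exact Finset.sum_le_sum_of_subset_of_nonneg (Finset.filter_subset _ _)
      (fun y _ _ => sq_nonneg _)
  have h7 : ∑ y, (w y)^2 ≤ M^2 := by
    calc ∑ y, (w y)^2 ≤ M^2 * ∑ z, (u z)^2 := hspec
      _ ≤ M^2 * 1 := by
          apply mul_le_mul_of_nonneg_left husq (by positivity)
      _ = M^2 := mul_one _
  have h5 : (S.card : ℝ) * ((q:ℝ)^k)^2 ≤ (S.card : ℝ) * c₀^2 := by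
    apply mul_le_mul_of_nonneg_left _ (Nat.cast_nonneg _)
    exact pow_le_pow_left₀ hqk.le hchebge 2
  have h6 : (S.card : ℝ) * c₀^2 = n^2 * ((S.card : ℝ) * (c₀/n)^2) := by
    field_simp
    try ring
  calc (S.card : ℝ) * ((q:ℝ)^k)^2 ≤ (S.card : ℝ) * c₀^2 := h5
    _ = n^2 * ((S.card : ℝ) * (c₀/n)^2) := h6
    _ ≤ n^2 * M^2 := by
        apply mul_le_mul_of_nonneg_left (hcount.trans h7) (by positivity)

end

open scoped Classical
open Filter

lemma ratio_le (q : ℕ) (hq : 2 ≤ q) {V : Type} [Fintype V] (G : SimpleGraph V)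
    (hreg : G.IsRegularOfDegree (q + 1)) (hconn : G.Connected)
    (hram : ∀ (μ : ℝ) (f : V → ℝ), f ≠ 0 →
      (∀ x, ∑ y ∈ G.neighborFinset x, f y = ((q : ℝ) + 1) * μ * f x) →
      μ = 1 ∨ |μ| ≤ 2 * Real.sqrt q / ((q : ℝ) + 1))
    (ε : ℝ) (hε : 0 < ε) (x : V) :
    ((Finset.univ.filter (fun y =>
        (1 + ε) * Real.logb q (Fintype.card V) < ((G.dist x y : ℕ) : ℝ))).card : ℝ)
      / (Fintype.card V : ℝ)
      ≤ (q:ℝ) * ((1 + ε) * Real.logb q (Fintype.card V) + 2)^2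
        / (Fintype.card V : ℝ)^ε := by
  classical
  have hq1 : (1:ℝ) < (q:ℝ) := by exact_mod_cast hq.trans_lt' one_lt_two |>.trans_le le_rfl
  have hq1le : (1:ℝ) ≤ (q:ℝ) := hq1.le
  have hq0 : (0:ℝ) < (q:ℝ) := by linarith
  set n : ℝ := (Fintype.card V : ℝ) with hn
  have hne : Nonempty V := hconn.nonempty
  have hn1 : 1 ≤ n := by
    rw [hn]; exact_mod_cast Fintype.card_pos
  have hnpos : (0:ℝ) < n := by linarith
  set r : ℝ := (1 + ε) * Real.logb q n with hr
  have hr0 : 0 ≤ r := by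
    apply mul_nonneg (by linarith)
    exact Real.logb_nonneg hq1 hn1
  set L : ℕ := ⌊r⌋₊ with hL
  have hLr : (L:ℝ) ≤ r := Nat.floor_le hr0
  have hrL1 : r < (L:ℝ) + 1 := Nat.lt_floor_add_one r
  -- subset of far vertices
  have hsub : (Finset.univ.filter (fun y => r < ((G.dist x y : ℕ) : ℝ)))
      ⊆ (Finset.univ.filter (fun y => L < G.dist x y)) := by
    intro y hy
    rw [Finset.mem_filter] at hy ⊢
    refine ⟨hy.1, ?_⟩
    have : (L:ℝ) < ((G.dist x y : ℕ) : ℝ) := lt_of_le_of_lt hLr hy.2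
    exact_mod_cast this
  set C' : ℝ := ((Finset.univ.filter (fun y => r < ((G.dist x y : ℕ) : ℝ))).card : ℝ)
    with hC'
  set C : ℝ := ((Finset.univ.filter (fun y => L < G.dist x y)).card : ℝ) with hC
  have hC'C : C' ≤ C := by
    rw [hC', hC]
    exact_mod_cast Finset.card_le_card hsub
  have hC'0 : 0 ≤ C' := Nat.cast_nonneg _
  have hC0 : 0 ≤ C := Nat.cast_nonneg _
  -- counting bound
  have hcount := count_le q hq G hreg hconn hram L x
  have hsqrt : ((Real.sqrt q)^L)^2 = (q:ℝ)^L := by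
    rw [← pow_mul, mul_comm, pow_mul, Real.sq_sqrt hq0.le]
  have hqLpos : (0:ℝ) < (q:ℝ)^L := by positivity
  have hC3 : C * (q:ℝ)^L ≤ n^2 * ((L:ℝ)+1)^2 := by
    have hMsq : (((L:ℝ)+1) * (Real.sqrt q)^L)^2 = ((L:ℝ)+1)^2 * (q:ℝ)^L := by
      rw [mul_pow, hsqrt]
    have hcount' : C * ((q:ℝ)^L)^2 ≤ n^2 * (((L:ℝ)+1)^2 * (q:ℝ)^L) := by
      rw [← hMsq]
      exact hcount
    have hC2 : (C * (q:ℝ)^L) * (q:ℝ)^L ≤ (n^2 * ((L:ℝ)+1)^2) * (q:ℝ)^L := by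
      nlinarith [hcount']
    exact le_of_mul_le_mul_right hC2 hqLpos
  -- q^L vs n^(1+ε)
  have hnn : n * n^ε ≤ (q:ℝ) * (q:ℝ)^L := by
    have h1 : (q:ℝ)^r = n * n^ε := by
      rw [hr, mul_comm (1+ε) (Real.logb q n), Real.rpow_mul hq0.le,
        Real.rpow_logb hq0 (by linarith) hnpos, Real.rpow_add hnpos, Real.rpow_one]
    have h2 : (q:ℝ)^r ≤ (q:ℝ)^((L:ℝ)+1) :=
      Real.rpow_le_rpow_of_exponent_le hq1le hrL1.le
    have h3 : (q:ℝ)^((L:ℝ)+1) = (q:ℝ) * (q:ℝ)^L := by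
      rw [show ((L:ℝ)+1) = ((L+1:ℕ):ℝ) by push_cast; ring, Real.rpow_natCast, pow_succ]
      ring
    rw [← h1]
    rw [h3] at h2
    exact h2
  have hL2 : ((L:ℝ)+1)^2 ≤ (r+2)^2 := by
    apply pow_le_pow_left₀ (by positivity)
    linarith
  have hnε : (0:ℝ) < n^ε := Real.rpow_pos_of_pos hnpos ε
  -- assemble
  rw [div_le_div_iff₀ hnpos hnε]
  -- goal : C' * n^ε ≤ q * (r+2)^2 * n
  have key : (C' * n^ε) * n ≤ ((q:ℝ) * (r+2)^2 * n) * n := by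
    have a1 : C' * (n * n^ε) ≤ C * ((q:ℝ) * (q:ℝ)^L) :=
      mul_le_mul hC'C hnn (by positivity) hC0
    have a3 : (q:ℝ) * (C * (q:ℝ)^L) ≤ (q:ℝ) * (n^2 * ((L:ℝ)+1)^2) :=
      mul_le_mul_of_nonneg_left hC3 hq0.le
    have a5 : (q:ℝ) * (n^2 * ((L:ℝ)+1)^2) ≤ (q:ℝ) * (n^2 * (r+2)^2) := by
      apply mul_le_mul_of_nonneg_left _ hq0.le
      apply mul_le_mul_of_nonneg_left hL2 (by positivity)
    nlinarith [a1, a3, a5]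
  exact le_of_mul_le_mul_right key hnpos

/-- In a family of `(q+1)`-regular non-bipartite Ramanujan graphs with
`n → ∞`, for every `ε > 0` and every choice of base vertices `x₀`, the number of
vertices at distance greater than `(1+ε) log_q n` from `x₀` is `o_ε(n)`. -/
theorem stmt5 (q : ℕ) (hq : 2 ≤ q) (V : ℕ → Type) [∀ m, Fintype (V m)]
    (G : ∀ m, SimpleGraph (V m))
    (hreg : ∀ m, (G m).IsRegularOfDegree (q + 1))
    (hconn : ∀ m, (G m).Connected)
    (hnb : ∀ m, ¬ (G m).Colorable 2)
    (hcard : Tendsto (fun m => Fintype.card (V m)) atTop atTop)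
    (hram : ∀ m (μ : ℝ) (f : V m → ℝ), f ≠ 0 →
      (∀ x, ∑ y ∈ (G m).neighborFinset x, f y = ((q : ℝ) + 1) * μ * f x) →
      μ = 1 ∨ |μ| ≤ 2 * Real.sqrt q / ((q : ℝ) + 1)) :
    ∀ ε : ℝ, 0 < ε → ∀ x : (∀ m, V m),
      Tendsto (fun m =>
        ((Finset.univ.filter (fun y =>
            (1 + ε) * Real.logb q (Fintype.card (V m)) < ((G m).dist (x m) y : ℝ))).card : ℝ)
          / (Fintype.card (V m) : ℝ))
        atTop (nhds 0) := by
  intro ε hε x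
  have hq1 : (1:ℝ) < (q:ℝ) := by exact_mod_cast lt_of_lt_of_le one_lt_two (by exact_mod_cast hq)
  have hq0 : (0:ℝ) < (q:ℝ) := by linarith
  -- the dominating function
  set gr : ℝ → ℝ := fun t => (q:ℝ) * ((1 + ε) * Real.logb q t + 2)^2 / t^ε with hgr
  have hgr_tendsto : Tendsto gr atTop (nhds 0) := by
    have h1 : Tendsto (fun t : ℝ => Real.log t / t^(ε/2)) atTop (nhds 0) :=
      (isLittleO_log_rpow_atTop (half_pos hε)).tendsto_div_nhds_zero
    have h2 : Tendsto (fun t : ℝ => (t^(ε/2))⁻¹) atTop (nhds 0) :=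
      (tendsto_rpow_atTop (half_pos hε)).inv_tendsto_atTop
    have h3 : Tendsto (fun t : ℝ =>
        ((1+ε)/Real.log q) * (Real.log t / t^(ε/2)) + 2 * (t^(ε/2))⁻¹) atTop (nhds 0) := by
      have := (h1.const_mul ((1+ε)/Real.log q)).add (h2.const_mul 2)
      simpa using this
    have h4 : Tendsto (fun t : ℝ =>
        ((1 + ε) * Real.logb q t + 2) / t^(ε/2)) atTop (nhds 0) := by
      apply h3.congr'
      filter_upwards [eventually_gt_atTop (0:ℝ)] with t ht
      have htε : t^(ε/2) ≠ 0 := ne_of_gt (Real.rpow_pos_of_pos ht _)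
      have hlq : Real.log q ≠ 0 := ne_of_gt (Real.log_pos hq1)
      rw [Real.logb]
      field_simp
    have h5 : Tendsto (fun t : ℝ =>
        (q:ℝ) * (((1 + ε) * Real.logb q t + 2) / t^(ε/2))^2) atTop (nhds 0) := by
      have := (h4.pow 2).const_mul (q:ℝ)
      simpa using this
    apply h5.congr'
    filter_upwards [eventually_gt_atTop (0:ℝ)] with t ht
    rw [hgr]
    have hsq : (t^(ε/2))^2 = t^ε := by
      rw [← Real.rpow_natCast (t^(ε/2)) 2, ← Real.rpow_mul ht.le]
      norm_num
    rw [div_pow, hsq]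
    ring
  -- cast cardinality tendsto
  have hncast : Tendsto (fun m => ((Fintype.card (V m) : ℝ))) atTop atTop :=
    tendsto_natCast_atTop_atTop.comp hcard
  have hcomp : Tendsto (fun m => gr ((Fintype.card (V m) : ℝ))) atTop (nhds 0) :=
    hgr_tendsto.comp hncast
  apply squeeze_zero (fun m => by positivity) _ hcomp
  intro m
  exact ratio_le q hq (G m) (hreg m) (hconn m) (hram m) ε hε (x m)
end

section
/- Let X be a finite (q+1)-regular non-bipartite Ramanujan graph on n vertices. Then for every ε > 0, for n large enough, the diameter of X is at most (2+ε)·log_q(n). -/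
open scoped Classical
open Filter Matrix

namespace Stmt6Aux


noncomputable def cheb (q : ℕ) (l : ℝ) : ℕ → ℝ
  | 0 => 1
  | 1 => l
  | (k+2) => l * cheb q l (k+1) - q * cheb q l k

lemma cheb_energy (q : ℕ) (l : ℝ) (k : ℕ) :
    cheb q l (k+1) ^ 2 - l * cheb q l (k+1) * cheb q l k + q * cheb q l k ^ 2 = (q:ℝ) ^ (k+1) := by
  induction k with
  | zero => simp only [cheb]; ring
  | succ k ih =>
      have h : cheb q l (k+2) = l * cheb q l (k+1) - q * cheb q l k := rfl
      rw [h, pow_succ]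
      linear_combination (q:ℝ) * ih

lemma cheb_abs_le (q : ℕ) (l : ℝ) (hl : |l| ≤ 2 * Real.sqrt q) :
    ∀ k, |cheb q l k| ≤ (k+1) * (Real.sqrt q) ^ k := by
  have hs0 : (0:ℝ) ≤ Real.sqrt q := Real.sqrt_nonneg _
  have hs2 : (Real.sqrt q) ^ 2 = (q:ℝ) := Real.sq_sqrt (by positivity)
  have step : ∀ k, |cheb q l (k+1)| ≤ Real.sqrt q * |cheb q l k| + (Real.sqrt q) ^ (k+1) := by
    intro k
    have hE := cheb_energy q l k
    set a := cheb q l (k+1)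
    set b := cheb q l k
    have h1 : l * a * b ≤ 2 * Real.sqrt q * (|a| * |b|) := by
      calc l * a * b ≤ |l * a * b| := le_abs_self _
        _ = |l| * (|a| * |b|) := by rw [abs_mul, abs_mul]; ring
        _ ≤ 2 * Real.sqrt q * (|a| * |b|) := by
            apply mul_le_mul_of_nonneg_right hl (by positivity)
    have h2 : (|a| - Real.sqrt q * |b|) ^ 2 ≤ ((Real.sqrt q) ^ (k+1)) ^ 2 := by
      have : ((Real.sqrt q) ^ (k+1)) ^ 2 = (q:ℝ) ^ (k+1) := by
        rw [← pow_mul, mul_comm, pow_mul, hs2]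
      rw [this, ← hE]
      have hq2 : (q:ℝ) * b ^ 2 = (Real.sqrt q * |b|) ^ 2 := by
        rw [mul_pow, hs2, sq_abs]
      nlinarith [sq_abs a, sq_abs b]
    have h3 : |a| - Real.sqrt q * |b| ≤ (Real.sqrt q) ^ (k+1) := by
      nlinarith [pow_nonneg hs0 (k+1), abs_nonneg a, abs_nonneg b]
    linarith
  intro k
  induction k with
  | zero => simp [cheb]
  | succ k ih =>
      calc |cheb q l (k+1)| ≤ Real.sqrt q * |cheb q l k| + (Real.sqrt q) ^ (k+1) := step k
        _ ≤ Real.sqrt q * ((k+1) * (Real.sqrt q) ^ k) + (Real.sqrt q) ^ (k+1) := by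
            apply add_le_add_left
            exact mul_le_mul_of_nonneg_left ih hs0
        _ = ((k+1:ℕ)+1) * (Real.sqrt q) ^ (k+1) := by push_cast; ring

lemma cheb_top_succ (q : ℕ) (k : ℕ) :
    cheb q ((q:ℝ)+1) (k+1) = q * cheb q ((q:ℝ)+1) k + 1 := by
  induction k with
  | zero => simp [cheb]
  | succ k ih =>
      have h : cheb q ((q:ℝ)+1) (k+2) = ((q:ℝ)+1) * cheb q ((q:ℝ)+1) (k+1) - q * cheb q ((q:ℝ)+1) k := rfl
      rw [h]
      linear_combination ih

lemma cheb_top_ge (q : ℕ) (k : ℕ) : ((q:ℝ))^k ≤ cheb q ((q:ℝ)+1) k := by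
  induction k with
  | zero => simp [cheb]
  | succ k ih =>
      rw [cheb_top_succ, pow_succ, mul_comm ((q:ℝ)^k) _]
      nlinarith [ih, Nat.cast_nonneg (α := ℝ) q, pow_nonneg (Nat.cast_nonneg (α := ℝ) q) k]



variable {V : Type} [Fintype V]

noncomputable def nbm (q : ℕ) (G : SimpleGraph V) : ℕ → Matrix V V ℝ
  | 0 => 1
  | 1 => G.adjMatrix ℝ
  | (k+2) => G.adjMatrix ℝ * nbm q G (k+1) - (q:ℝ) • nbm q G k

lemma nbm_mulVec (q : ℕ) (G : SimpleGraph V) (f : V → ℝ) (l : ℝ)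
    (hf : G.adjMatrix ℝ *ᵥ f = l • f) (k : ℕ) :
    nbm q G k *ᵥ f = cheb q l k • f := by
  have key : ∀ k, nbm q G k *ᵥ f = cheb q l k • f ∧
      nbm q G (k+1) *ᵥ f = cheb q l (k+1) • f := by
    intro k
    induction k with
    | zero =>
        refine ⟨by simp [nbm, cheb], ?_⟩
        simpa [nbm, cheb] using hf
    | succ k ih =>
        refine ⟨ih.2, ?_⟩
        have h : nbm q G (k+2) = G.adjMatrix ℝ * nbm q G (k+1) - (q:ℝ) • nbm q G k := rfl
        rw [h, Matrix.sub_mulVec, ← Matrix.mulVec_mulVec, ih.2, Matrix.smul_mulVec,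
          ih.1, Matrix.mulVec_smul, hf]
        funext x
        have hc : cheb q l (k+2) = l * cheb q l (k+1) - q * cheb q l k := rfl
        simp [hc, smul_smul, Pi.smul_apply, Pi.sub_apply, smul_eq_mul]
        ring
  exact (key k).1

lemma nbm_support (q : ℕ) (G : SimpleGraph V) (hc : G.Connected) (k : ℕ) :
    ∀ x y : V, k < G.dist x y → nbm q G k x y = 0 := by
  induction k using Nat.strong_induction_on with
  | _ k ih =>
    match k with
    | 0 =>
        intro x y h
        have hxy : x ≠ y := by
          rintro rfl; simp [SimpleGraph.dist_self] at h
        simp [nbm, Matrix.one_apply_ne hxy]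
    | 1 =>
        intro x y h
        have : ¬ G.Adj x y := by
          intro hadj
          have := G.dist_le hadj.toWalk
          simp at this
          omega
        simp [nbm, this]
    | (k+2) =>
        intro x y h
        have h1 : nbm q G (k+2) x y =
            (G.adjMatrix ℝ * nbm q G (k+1)) x y - (q:ℝ) * nbm q G k x y := by
          have hdef : nbm q G (k+2) = G.adjMatrix ℝ * nbm q G (k+1) - (q:ℝ) • nbm q G k := rfl
          rw [hdef]; simp [Matrix.sub_apply]
        rw [h1, SimpleGraph.adjMatrix_mul_apply]
        have hz : ∀ u ∈ G.neighborFinset x, nbm q G (k+1) u y = 0 := by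
          intro u hu
          rw [SimpleGraph.mem_neighborFinset] at hu
          apply ih (k+1) (by omega)
          have htri : G.dist x y ≤ G.dist x u + G.dist u y := hc.dist_triangle
          have hxu : G.dist x u ≤ 1 := by
            have := G.dist_le hu.toWalk
            simpa using this
          omega
        rw [Finset.sum_eq_zero hz, ih k (by omega) x y (by omega)]
        ring


lemma perron (d : ℕ) (G : SimpleGraph V) (hc : G.Connected)
    (hreg : G.IsRegularOfDegree d) (f : V → ℝ)
    (hf : ∀ x, ∑ y ∈ G.neighborFinset x, f y = d * f x) :
    ∀ x y : V, f x = f y := by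
  haveI : Nonempty V := hc.nonempty
  obtain ⟨x0, -, hx0⟩ := Finset.exists_max_image Finset.univ f ⟨Classical.arbitrary V, Finset.mem_univ _⟩
  have hmax : ∀ x, f x ≤ f x0 := fun x => hx0 x (Finset.mem_univ x)
  have step : ∀ u w, f u = f x0 → G.Adj u w → f w = f x0 := by
    intro u w hu hadj
    by_contra hne
    have hwlt : f w < f x0 := lt_of_le_of_ne (hmax w) hne
    have hwmem : w ∈ G.neighborFinset u := (SimpleGraph.mem_neighborFinset G u w).2 hadj
    have hlt : ∑ y ∈ G.neighborFinset u, f y < ∑ _y ∈ G.neighborFinset u, f x0 :=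
      Finset.sum_lt_sum (fun i _ => hmax i) ⟨w, hwmem, hwlt⟩
    have hcard : (G.neighborFinset u).card = d := hreg u
    rw [Finset.sum_const, hcard, hf u, hu, nsmul_eq_mul] at hlt
    exact absurd hlt (lt_irrefl _)
  have hwalk : ∀ (u x : V) (p : G.Walk u x), f u = f x0 → f x = f x0 := by
    intro u x p
    induction p with
    | nil => exact id
    | cons hadj _ ih => exact fun hu => ih (step _ _ hu hadj)
  have hall : ∀ x, f x = f x0 := fun x => hwalk x0 x (hc x0 x).some rfl
  intro x y; rw [hall x, hall y]
lemma key (q : ℕ) (hq : 2 ≤ q) (G : SimpleGraph V)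
    (hreg : G.IsRegularOfDegree (q+1)) (hconn : G.Connected)
    (hram : ∀ (μ : ℝ) (f : V → ℝ), f ≠ 0 →
      (∀ x, ∑ y ∈ G.neighborFinset x, f y = ((q : ℝ) + 1) * μ * f x) →
      μ = 1 ∨ |μ| ≤ 2 * Real.sqrt q / ((q : ℝ) + 1))
    (K : ℕ) (hK : ((K:ℝ)+1) * (Fintype.card V) < (Real.sqrt q) ^ K) :
    ∀ x y : V, G.dist x y ≤ K := by
  haveI : Nonempty V := hconn.nonempty
  have hA : (G.adjMatrix ℝ).IsHermitian := by
    rw [Matrix.IsHermitian, Matrix.conjTranspose_eq_transpose_of_trivial]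
    exact G.isSymm_adjMatrix
  set b := hA.eigenvectorBasis with hbdef
  set lam := hA.eigenvalues with hlamdef
  have hev : ∀ i, G.adjMatrix ℝ *ᵥ ⇑(b i) = lam i • ⇑(b i) := hA.mulVec_eigenvectorBasis
  have hq1 : ((q:ℝ)+1) > 0 := by positivity
  have hs0 : (0:ℝ) ≤ Real.sqrt q := Real.sqrt_nonneg _
  have hs2 : (Real.sqrt q) ^ 2 = (q:ℝ) := Real.sq_sqrt (by positivity)
  -- delta identity
  have hdelta : ∀ x z : V, (∑ i, b i x * b i z) = if x = z then 1 else 0 := by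
    intro x z
    have h := OrthonormalBasis.sum_inner_mul_inner b
      (EuclideanSpace.single x (1:ℝ)) (EuclideanSpace.single z (1:ℝ))
    simp only [EuclideanSpace.inner_single_left, EuclideanSpace.inner_single_right,
      EuclideanSpace.single_apply, _root_.map_one, one_mul, mul_one, starRingEnd_apply,
      star_trivial] at h
    convert h using 2
    simp [eq_comm]
  have hrow : ∀ x : V, ∑ i, (b i x)^2 = 1 := by
    intro x
    have := hdelta x x
    simpa [sq] using this
  have hcol : ∀ i, ∑ z, (b i z)^2 = 1 := by
    intro i
    have h := orthonormal_iff_ite.mp b.orthonormal i i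
    simp only [if_pos rfl] at h
    rw [PiLp.inner_apply] at h
    simpa [sq, starRingEnd_apply, star_trivial] using h
  have hne : ∀ i, (⇑(b i) : V → ℝ) ≠ 0 := by
    intro i h0
    apply b.orthonormal.ne_zero i
    ext z
    exact congrFun h0 z
  -- eigen equation pointwise
  have heigpt : ∀ i x, ∑ y ∈ G.neighborFinset x, b i y = lam i * b i x := by
    intro i x
    have h1 := congrFun (hev i) x
    rw [SimpleGraph.adjMatrix_mulVec_apply] at h1
    simpa using h1
  -- dichotomy
  have hdich : ∀ i, lam i = (q:ℝ)+1 ∨ |lam i| ≤ 2 * Real.sqrt q := by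
    intro i
    have heig : ∀ x, ∑ y ∈ G.neighborFinset x, b i y
        = ((q:ℝ)+1) * (lam i / ((q:ℝ)+1)) * b i x := by
      intro x
      rw [heigpt i x]
      field_simp
    rcases hram _ _ (hne i) heig with h | h
    · left
      field_simp at h
      linarith
    · right
      rw [abs_div, abs_of_pos hq1, div_le_div_iff_of_pos_right hq1] at h
      exact h
  -- constant top eigenvectors
  have hcard0 : (0:ℝ) < (Fintype.card V : ℝ) := by
    exact_mod_cast Fintype.card_pos
  have htopconst : ∀ i, lam i = (q:ℝ)+1 → ∀ x y : V,
      b i x * b i y = 1 / (Fintype.card V : ℝ) := by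
    intro i hi x y
    have hconst : ∀ x y : V, b i x = b i y := by
      apply perron (q+1) G hconn hreg
      intro x
      rw [heigpt i x, hi]
      push_cast
      ring
    have hsum := hcol i
    have hall : ∀ z, (b i z)^2 = (b i x)^2 := fun z => by rw [hconst z x]
    rw [Finset.sum_congr rfl (fun z _ => hall z), Finset.sum_const, Finset.card_univ,
      nsmul_eq_mul] at hsum
    have hbx : (b i x)^2 = 1 / (Fintype.card V : ℝ) := by
      field_simp at hsum ⊢
      linarith
    rw [hconst y x] at *
    calc b i x * b i x = (b i x)^2 := (sq (b i x)).symm ▸ by ring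
      _ = 1 / (Fintype.card V : ℝ) := hbx
  -- existence of top eigenvalue
  have htopex : ∃ i, lam i = (q:ℝ)+1 := by
    by_contra hno
    push_neg at hno
    have hrowsum : ∀ y : V, (∑ z, G.adjMatrix ℝ z y) = ((q:ℝ)+1) := by
      intro y
      have : ∀ z, G.adjMatrix ℝ z y = G.adjMatrix ℝ y z := fun z => by
        simp [SimpleGraph.adjMatrix_apply, SimpleGraph.adj_comm]
      rw [Finset.sum_congr rfl (fun z _ => this z)]
      have hd : ∑ z, G.adjMatrix ℝ y z = ∑ u ∈ G.neighborFinset y, (1:ℝ) := by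
        simpa [dotProduct] using SimpleGraph.adjMatrix_dotProduct (α := ℝ) G y (fun _ => (1:ℝ))
      have hcrd : (G.neighborFinset y).card = q + 1 := hreg y
      rw [hd, Finset.sum_const, hcrd, nsmul_eq_mul]
      push_cast
      ring
    have ht0 : ∀ i, ∑ z, b i z = 0 := by
      intro i
      have hsum1 : ∑ z, (G.adjMatrix ℝ *ᵥ ⇑(b i)) z = lam i * ∑ z, b i z := by
        rw [hev i]
        simp [Finset.mul_sum]
      have hsum2 : ∑ z, (G.adjMatrix ℝ *ᵥ ⇑(b i)) z = ((q:ℝ)+1) * ∑ z, b i z := by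
        simp only [Matrix.mulVec, dotProduct]
        rw [Finset.sum_comm, Finset.mul_sum]
        refine Finset.sum_congr rfl fun yy _ => ?_
        rw [← Finset.sum_mul, hrowsum yy]
      have hfac : (lam i - ((q:ℝ)+1)) * (∑ z, b i z) = 0 := by
        rw [sub_mul, hsum1.symm.trans hsum2]
        ring
      rcases mul_eq_zero.mp hfac with h | h
      · exact absurd (by linarith [sub_eq_zero.mp h] : lam i = (q:ℝ)+1) (hno i)
      · exact h
    obtain ⟨x⟩ := (inferInstance : Nonempty V)
    have h1 : ∑ z, (∑ i, b i x * b i z) = 1 := by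
      rw [Finset.sum_congr rfl (fun z _ => hdelta x z)]
      simp
    rw [Finset.sum_comm] at h1
    have h2 : ∀ i : V, ∑ z, b i x * b i z = 0 := by
      intro i
      rw [← Finset.mul_sum, ht0 i, mul_zero]
    rw [Finset.sum_congr rfl (fun i _ => h2 i)] at h1
    simp at h1
  -- entry formula
  have hentry : ∀ x y : V, nbm q G K x y = ∑ i, (b i y) * (cheb q (lam i) K * b i x) := by
    intro x y
    have hsingle : (Pi.single y (1:ℝ)) = ∑ i, (b i y) • (⇑(b i) : V → ℝ) := by
      funext z
      rw [Finset.sum_apply]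
      have h := hdelta z y
      have h1 : (Pi.single y (1:ℝ) : V → ℝ) z = if z = y then (1:ℝ) else 0 := by
        by_cases hzy : z = y
        · subst hzy; rw [if_pos rfl]; exact Pi.single_eq_same (M := fun _ : V => ℝ) z 1
        · rw [if_neg hzy]; exact Pi.single_eq_of_ne (M := fun _ : V => ℝ) hzy 1
      rw [h1, ← h]
      exact Finset.sum_congr rfl fun i _ => mul_comm _ _
    have h1 : nbm q G K x y = (nbm q G K *ᵥ Pi.single y 1) x := by
      rw [Matrix.mulVec_single]
      simp
    rw [h1, hsingle, ← Matrix.mulVecLin_apply, map_sum]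
    rw [Finset.sum_apply]
    refine Finset.sum_congr rfl (fun i _ => ?_)
    rw [_root_.map_smul, Matrix.mulVecLin_apply, nbm_mulVec q G _ _ (hev i) K]
    show b i y * (cheb q (lam i) K * b i x) = _
    rfl
  -- final contradiction setup
  intro x y
  by_contra hgt
  push_neg at hgt
  have hzero : nbm q G K x y = 0 := nbm_support q G hconn K x y hgt
  rw [hentry x y] at hzero
  set n := (Fintype.card V : ℝ) with hndef
  set s := Real.sqrt q with hsdef
  have hsK : (0:ℝ) < s ^ K := by
    have : (0:ℝ) < s := Real.sqrt_pos.mpr (by positivity)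
    positivity
  set p := fun i : V => lam i = (q:ℝ)+1 with hpdef
  have hsplitsum := (Finset.sum_filter_add_sum_filter_not Finset.univ p
    (fun i => (b i y) * (cheb q (lam i) K * b i x))).symm
  set T := Finset.univ.filter p with hTdef
  set Tc := Finset.univ.filter (fun i => ¬ p i) with hTcdef
  -- T sum lower bound
  have hTterm : ∀ i ∈ T, (b i y) * (cheb q (lam i) K * b i x)
      = cheb q ((q:ℝ)+1) K * (1/n) := by
    intro i hi
    have hi' : lam i = (q:ℝ)+1 := (Finset.mem_filter.mp hi).2
    rw [hi']
    have := htopconst i hi' x y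
    calc b i y * (cheb q ((q:ℝ)+1) K * b i x)
        = cheb q ((q:ℝ)+1) K * (b i x * b i y) := by ring
      _ = cheb q ((q:ℝ)+1) K * (1/n) := by rw [this]
  have hTne : T.Nonempty := by
    obtain ⟨i, hi⟩ := htopex
    exact ⟨i, Finset.mem_filter.mpr ⟨Finset.mem_univ i, hi⟩⟩
  have hchebtop : ((q:ℝ))^K ≤ cheb q ((q:ℝ)+1) K := cheb_top_ge q K
  have hqK : ((q:ℝ))^K = s^K * s^K := by
    rw [← hs2, ← pow_mul]
    ring
  have hTsum : s^K * s^K * (1/n) ≤ ∑ i ∈ T, (b i y) * (cheb q (lam i) K * b i x) := by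
    rw [Finset.sum_congr rfl hTterm, Finset.sum_const, nsmul_eq_mul]
    have h1 : (1:ℝ) ≤ (T.card : ℝ) := by
      exact_mod_cast Finset.card_pos.mpr hTne
    have h2 : (0:ℝ) < 1/n := by positivity
    calc s^K * s^K * (1/n) = ((q:ℝ))^K * (1/n) := by rw [hqK]
      _ ≤ cheb q ((q:ℝ)+1) K * (1/n) := by
          exact mul_le_mul_of_nonneg_right hchebtop (le_of_lt h2)
      _ ≤ (T.card : ℝ) * (cheb q ((q:ℝ)+1) K * (1/n)) := by
          have hqKpos : (0:ℝ) ≤ (q:ℝ)^K := by positivity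
          have hpos : 0 ≤ cheb q ((q:ℝ)+1) K * (1/n) :=
            mul_nonneg (le_trans hqKpos hchebtop) (le_of_lt h2)
          exact le_mul_of_one_le_left hpos h1
  -- Tc sum bound
  have hCS : ∑ i, |b i x| * |b i y| ≤ 1 := by
    have h := Finset.sum_mul_sq_le_sq_mul_sq Finset.univ (fun i => |b i x|) (fun i => |b i y|)
    simp only [sq_abs] at h
    rw [hrow x, hrow y, mul_one] at h
    have hnn : (0:ℝ) ≤ ∑ i, |b i x| * |b i y| :=
      Finset.sum_nonneg fun i _ => mul_nonneg (abs_nonneg _) (abs_nonneg _)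
    nlinarith
  have hTcsum : |∑ i ∈ Tc, (b i y) * (cheb q (lam i) K * b i x)| ≤ ((K:ℝ)+1) * s^K := by
    calc |∑ i ∈ Tc, (b i y) * (cheb q (lam i) K * b i x)|
        ≤ ∑ i ∈ Tc, |(b i y) * (cheb q (lam i) K * b i x)| := Finset.abs_sum_le_sum_abs _ _
      _ ≤ ∑ i ∈ Tc, ((K:ℝ)+1) * s^K * (|b i x| * |b i y|) := by
          refine Finset.sum_le_sum (fun i hi => ?_)
          have hi' : ¬ (lam i = (q:ℝ)+1) := (Finset.mem_filter.mp hi).2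
          have hlami : |lam i| ≤ 2 * s := (hdich i).resolve_left hi'
          have hcb := cheb_abs_le q (lam i) hlami K
          rw [abs_mul, abs_mul]
          calc |b i y| * (|cheb q (lam i) K| * |b i x|)
              ≤ |b i y| * ((((K:ℝ)+1) * s^K) * |b i x|) := by
                refine mul_le_mul_of_nonneg_left ?_ (abs_nonneg _)
                exact mul_le_mul_of_nonneg_right hcb (abs_nonneg _)
            _ = ((K:ℝ)+1) * s^K * (|b i x| * |b i y|) := by ring
      _ = ((K:ℝ)+1) * s^K * ∑ i ∈ Tc, (|b i x| * |b i y|) := by rw [Finset.mul_sum]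
      _ ≤ ((K:ℝ)+1) * s^K * ∑ i, (|b i x| * |b i y|) := by
          refine mul_le_mul_of_nonneg_left ?_ (by positivity)
          refine Finset.sum_le_sum_of_subset_of_nonneg (Finset.filter_subset _ _) ?_
          intro i _ _
          exact mul_nonneg (abs_nonneg _) (abs_nonneg _)
      _ ≤ ((K:ℝ)+1) * s^K * 1 := by
          exact mul_le_mul_of_nonneg_left hCS (by positivity)
      _ = ((K:ℝ)+1) * s^K := by ring
  -- combine
  have hcontr : (0:ℝ) < ∑ i, (b i y) * (cheb q (lam i) K * b i x) := by
    rw [hsplitsum]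
    have hK' : ((K:ℝ)+1) * n < s^K := hK
    have h1 : ((K:ℝ)+1) * s^K < s^K * s^K * (1/n) := by
      rw [mul_one_div]
      rw [lt_div_iff₀ hcard0]
      calc ((K:ℝ)+1) * s^K * n = (((K:ℝ)+1) * n) * s^K := by ring
        _ < s^K * s^K := by exact mul_lt_mul_of_pos_right hK' hsK
    have h2 : -(((K:ℝ)+1) * s^K) ≤ ∑ i ∈ Tc, (b i y) * (cheb q (lam i) K * b i x) :=
      neg_le_of_abs_le hTcsum
    linarith
  rw [hzero] at hcontr
  exact lt_irrefl _ hcontr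

end Stmt6Aux

/-- In a family of `(q+1)`-regular non-bipartite Ramanujan graphs with
`n → ∞`, for every `ε > 0` and all `n` large enough, the diameter is at most
`(2+ε) log_q n`. -/
theorem stmt6 (q : ℕ) (hq : 2 ≤ q) (V : ℕ → Type) [∀ m, Fintype (V m)]
    (G : ∀ m, SimpleGraph (V m))
    (hreg : ∀ m, (G m).IsRegularOfDegree (q + 1))
    (hconn : ∀ m, (G m).Connected)
    (hnb : ∀ m, ¬ (G m).Colorable 2)
    (hcard : Tendsto (fun m => Fintype.card (V m)) atTop atTop)
    (hram : ∀ m (μ : ℝ) (f : V m → ℝ), f ≠ 0 →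
      (∀ x, ∑ y ∈ (G m).neighborFinset x, f y = ((q : ℝ) + 1) * μ * f x) →
      μ = 1 ∨ |μ| ≤ 2 * Real.sqrt q / ((q : ℝ) + 1)) :
    ∀ ε : ℝ, 0 < ε → ∀ᶠ m in atTop, ∀ x y : V m,
      ((G m).dist x y : ℝ) ≤ (2 + ε) * Real.logb q (Fintype.card (V m)) := by
  intro ε hε
  have hq1 : (1:ℝ) < (q:ℝ) := by exact_mod_cast (by omega : 1 < q)
  have hq0 : (0:ℝ) < (q:ℝ) := by positivity
  have hlogq : 0 < Real.log q := Real.log_pos hq1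
  have hε4 : (0:ℝ) < ε/4 := by linarith
  -- eventual smallness of log vs power, over ℝ
  have hRsmall : ∀ᶠ x : ℝ in atTop, (2+ε) * Real.logb q x + 2 < x ^ (ε/4 : ℝ) := by
    obtain ⟨C, hC, hCdef⟩ : ∃ C : ℝ, 0 < C ∧ C = (2+ε)/Real.log q + 2 :=
      ⟨_, by positivity, rfl⟩
    have h1 : ∀ᶠ x : ℝ in atTop, 1 ≤ Real.log x :=
      Real.tendsto_log_atTop.eventually_ge_atTop 1
    have h2 : ∀ᶠ x : ℝ in atTop, ‖Real.log x‖ ≤ (1/(2*C)) * ‖x ^ (ε/4 : ℝ)‖ :=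
      (isLittleO_log_rpow_atTop hε4).bound (by positivity)
    have h3 : ∀ᶠ x : ℝ in atTop, (1:ℝ) ≤ x := eventually_ge_atTop 1
    filter_upwards [h1, h2, h3] with x hx1 hx2 hx3
    have hlx : 0 < Real.log x := by linarith
    have hrp : (0:ℝ) < x ^ (ε/4 : ℝ) := Real.rpow_pos_of_pos (by linarith) _
    rw [Real.norm_eq_abs, Real.norm_eq_abs, abs_of_pos hlx, abs_of_pos hrp] at hx2
    have hlogb : Real.logb q x = Real.log x / Real.log q := rfl
    have hb1 : (2+ε) * Real.logb q x + 2 ≤ C * Real.log x := by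
      rw [hlogb, hCdef]
      have : (2+ε) * (Real.log x / Real.log q) = (2+ε)/Real.log q * Real.log x := by ring
      rw [this]
      have h2le : (2:ℝ) ≤ 2 * Real.log x := by linarith
      have hnn : 0 ≤ (2+ε)/Real.log q * Real.log x := by positivity
      nlinarith
    have hb2 : C * Real.log x ≤ C * ((1/(2*C)) * x ^ (ε/4 : ℝ)) :=
      mul_le_mul_of_nonneg_left hx2 (le_of_lt hC)
    have hCne : C ≠ 0 := ne_of_gt hC
    have heq : C * ((1/(2*C)) * x ^ (ε/4 : ℝ)) = x ^ (ε/4 : ℝ) / 2 := by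
      field_simp
    nlinarith [hb1, hb2, heq, hrp]
  -- eventual conditions on natural n
  have hNlogb : Tendsto (fun n : ℕ => Real.logb q n) atTop atTop :=
    (Real.tendsto_logb_atTop hq1).comp tendsto_natCast_atTop_atTop
  have hNsmall : ∀ᶠ n : ℕ in atTop,
      (2+ε) * Real.logb q n + 2 < (n:ℝ) ^ (ε/4 : ℝ) :=
    tendsto_natCast_atTop_atTop.eventually hRsmall
  have hNL : ∀ᶠ n : ℕ in atTop, (2:ℝ)/ε ≤ Real.logb q n :=
    hNlogb.eventually_ge_atTop _
  have hN2 : ∀ᶠ n : ℕ in atTop, 2 ≤ n := eventually_ge_atTop 2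
  -- pull back to m
  filter_upwards [hcard.eventually hNsmall, hcard.eventually hNL, hcard.eventually hN2]
    with m hsmall hL hn2
  set n := Fintype.card (V m) with hndef
  set L := Real.logb q n with hLdef
  have hL0 : 0 < L := lt_of_lt_of_le (by positivity) hL
  have hnR : (2:ℝ) ≤ (n:ℝ) := by exact_mod_cast hn2
  have hnR0 : (0:ℝ) < (n:ℝ) := by linarith
  set K := ⌈(2+ε/2)*L⌉₊ with hKdef
  have hKge : (2+ε/2)*L ≤ (K:ℝ) := Nat.le_ceil _
  have hKlt : (K:ℝ) < (2+ε/2)*L + 1 := Nat.ceil_lt_add_one (by positivity)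
  have hKle : (K:ℝ) ≤ (2+ε)*L := by
    have h1 : (1:ℝ) ≤ ε/2 * L := by
      have h2 := mul_le_mul_of_nonneg_left hL (le_of_lt (half_pos hε))
      calc (1:ℝ) = ε/2 * (2/ε) := by field_simp
        _ ≤ ε/2 * L := h2
    nlinarith
  -- the key quantitative hypothesis
  have hKbig : ((K:ℝ)+1) * (n:ℝ) < (Real.sqrt q) ^ K := by
    have hsq : (Real.sqrt q : ℝ) ^ K = (q:ℝ) ^ ((K:ℝ)/2 : ℝ) := by
      rw [Real.sqrt_eq_rpow, ← Real.rpow_natCast ((q:ℝ) ^ ((1:ℝ)/2:ℝ)) K,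
        ← Real.rpow_mul (le_of_lt hq0)]
      rw [show (1:ℝ)/2 * (K:ℝ) = (K:ℝ)/2 by ring]
    have hmono : (q:ℝ) ^ ((1+ε/4)*L : ℝ) ≤ (q:ℝ) ^ ((K:ℝ)/2 : ℝ) :=
      Real.rpow_le_rpow_of_exponent_le (le_of_lt hq1) (by linarith)
    have hqL : (q:ℝ) ^ ((1+ε/4)*L : ℝ) = (n:ℝ) * (n:ℝ)^(ε/4:ℝ) := by
      rw [show ((1+ε/4)*L : ℝ) = L * (1+ε/4) by ring,
        Real.rpow_mul (le_of_lt hq0), Real.rpow_logb hq0 (ne_of_gt hq1) hnR0,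
        show ((1:ℝ)+ε/4) = 1 + ε/4 from rfl, Real.rpow_add hnR0, Real.rpow_one]
    have hK1 : (K:ℝ)+1 < (n:ℝ)^(ε/4:ℝ) := by
      have h2 : (2+ε/2)*L + 2 ≤ (2+ε)*L + 2 := by nlinarith
      linarith
    calc ((K:ℝ)+1)*(n:ℝ) < (n:ℝ)^(ε/4:ℝ) * (n:ℝ) := mul_lt_mul_of_pos_right hK1 hnR0
      _ = (q:ℝ) ^ ((1+ε/4)*L : ℝ) := by rw [hqL]; ring
      _ ≤ (q:ℝ) ^ ((K:ℝ)/2 : ℝ) := hmono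
      _ = (Real.sqrt q) ^ K := hsq.symm
  have hdiam := Stmt6Aux.key q hq (G m) (hreg m) (hconn m) (hram m) K hKbig
  intro x y
  calc ((G m).dist x y : ℝ) ≤ (K:ℝ) := by exact_mod_cast hdiam x y
    _ ≤ (2+ε)*L := hKle
end

section
/- Let X be a finite (q+1)-regular graph on n vertices with normalized adjacency eigenvalues having p-values p₀,…,p_{n−1} (where p_i = 2 if |λ_i| ≤ 2√q/(q+1), and otherwise |λ_i| = (q^{1/p_i} + q^{1−1/p_i})/(q+1) with 2 < p_i ≤ ∞). Fix 0 < A ≤ 1. Then the condition 'for every p > 2 and ε > 0, #{i : p_i ≥ p} ≪_ε n^{1−A(1−2/p)+ε}' is equivalent to the condition 'for every ε > 0, ∑_i n^{−1+A(1−2/p_i)} ≪_ε n^ε'. -/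
open scoped Classical
open Matrix

lemma eig_bound {n : Type*} [Fintype n] [DecidableEq n] (G : SimpleGraph n)
    [DecidableRel G.Adj] {d : ℕ} (hreg : G.IsRegularOfDegree d) {μ : ℝ}
    (hroot : (G.adjMatrix ℝ).charpoly.IsRoot μ) : |μ| ≤ d := by
  classical
  set M := G.adjMatrix ℝ with hM
  have h1 : ((Matrix.charmatrix M).map (Polynomial.eval μ)) = μ • (1 : Matrix n n ℝ) - M := by
    ext i j
    by_cases h : i = j
    · subst h
      simp [Matrix.charmatrix_apply_eq, Matrix.one_apply]
    · simp [Matrix.charmatrix_apply_ne _ _ _ h, Matrix.one_apply, h]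
  have hdet : (μ • (1 : Matrix n n ℝ) - M).det = 0 := by
    have h3 := (RingHom.map_det (Polynomial.evalRingHom μ) (Matrix.charmatrix M))
    simp only [Polynomial.coe_evalRingHom, RingHom.mapMatrix_apply] at h3
    rw [← h1, ← h3]
    exact hroot
  obtain ⟨v, hv0, hv⟩ := Matrix.exists_mulVec_eq_zero_iff.mpr hdet
  have hvmul : M *ᵥ v = μ • v := by
    rw [Matrix.sub_mulVec, sub_eq_zero] at hv
    rw [← hv, Matrix.smul_mulVec, Matrix.one_mulVec]
  obtain ⟨k, hk⟩ := Function.ne_iff.mp hv0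
  obtain ⟨j, -, hj⟩ := Finset.exists_max_image Finset.univ (fun j => |v j|) ⟨k, Finset.mem_univ k⟩
  have hvj : 0 < |v j| := by
    exact lt_of_lt_of_le (abs_pos.mpr hk) (hj k (Finset.mem_univ k))
  have key : |μ| * |v j| ≤ d * |v j| := by
    have h2 : μ * v j = ∑ u ∈ G.neighborFinset j, v u := by
      have h4 := congrFun hvmul j
      rw [hM] at h4
      simpa [Pi.smul_apply] using h4.symm
    calc |μ| * |v j| = |μ * v j| := (abs_mul μ (v j)).symm
      _ = |∑ u ∈ G.neighborFinset j, v u| := by rw [h2]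
      _ ≤ ∑ u ∈ G.neighborFinset j, |v u| := Finset.abs_sum_le_sum_abs _ _
      _ ≤ ∑ u ∈ G.neighborFinset j, |v j| := Finset.sum_le_sum fun u _ => hj u (Finset.mem_univ u)
      _ = d * |v j| := by
          rw [Finset.sum_const, show (G.neighborFinset j).card = d from hreg j, nsmul_eq_mul]
  exact le_of_mul_le_mul_right key hvj


/-- The reciprocal `1/p` of the `p`-value of a normalized adjacency eigenvalue `lam` of a
`(q+1)`-regular graph: it is `1/2` if `|lam| ≤ 2√q/(q+1)`, and otherwise `1/p ∈ [0,1/2)`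
is determined by `|lam| = (q^{1/p} + q^{1-1/p})/(q+1)`, i.e. `q^{1-1/p} = θ` is the larger
root `((q+1)|lam| + √((q+1)²lam² − 4q))/2`. -/
noncomputable def pexp (q : ℕ) (lam : ℝ) : ℝ :=
  if |lam| ≤ 2 * Real.sqrt q / ((q : ℝ) + 1) then 1 / 2
  else 1 - Real.logb q
    ((((q : ℝ) + 1) * |lam| + Real.sqrt (((q : ℝ) + 1) ^ 2 * lam ^ 2 - 4 * q)) / 2)

lemma pexp_bounds {q : ℕ} (hq : 2 ≤ q) {lam : ℝ} (hlam : |lam| ≤ 1) :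
    0 ≤ pexp q lam ∧ pexp q lam ≤ 1 / 2 := by
  have hq1 : (1 : ℝ) < q := by exact_mod_cast hq.trans_lt' one_lt_two
  have hqpos : (0 : ℝ) < q := by linarith
  unfold pexp
  split_ifs with h
  · norm_num
  push_neg at h
  set s := Real.sqrt (((q : ℝ) + 1) ^ 2 * lam ^ 2 - 4 * q) with hs
  set θ := ((((q : ℝ) + 1) * |lam| + s) / 2) with hθ
  have hsq : 0 < Real.sqrt q := Real.sqrt_pos.mpr hqpos
  have hsnn : 0 ≤ s := Real.sqrt_nonneg _
  have hlb : Real.sqrt q < θ := by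
    have h2 : 2 * Real.sqrt q < ((q : ℝ) + 1) * |lam| := by
      rw [div_lt_iff₀ (by positivity)] at h
      linarith [h]
    rw [hθ]; linarith
  have hub : θ ≤ q := by
    have hD : ((q : ℝ) + 1) ^ 2 * lam ^ 2 - 4 * q ≤ ((q : ℝ) - 1) ^ 2 := by
      have hl2 : lam ^ 2 ≤ 1 := by nlinarith [sq_abs lam, abs_nonneg lam]
      nlinarith [mul_le_mul_of_nonneg_left hl2 (sq_nonneg ((q : ℝ) + 1))]
    have hsub : s ≤ (q : ℝ) - 1 := by
      calc s ≤ Real.sqrt (((q : ℝ) - 1) ^ 2) := Real.sqrt_le_sqrt hD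
        _ = |(q : ℝ) - 1| := Real.sqrt_sq_eq_abs _
        _ = (q : ℝ) - 1 := abs_of_nonneg (by linarith)
    have hl : ((q : ℝ) + 1) * |lam| ≤ (q : ℝ) + 1 := by
      nlinarith [abs_nonneg lam]
    rw [hθ]; linarith
  have hθpos : 0 < θ := hsq.trans hlb
  constructor
  · have h5 : Real.logb q θ ≤ Real.logb q q :=
      (Real.logb_le_logb hq1 hθpos (by positivity)).mpr hub
    rw [Real.logb_self_eq_one hq1] at h5
    linarith
  · have h12 : Real.logb q (Real.sqrt q) ≤ Real.logb q θ :=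
      (Real.logb_le_logb hq1 hsq hθpos).mpr hlb.le
    have h6 : Real.logb q (Real.sqrt q) = 1 / 2 := by
      rw [Real.sqrt_eq_rpow, Real.logb_rpow hqpos (by linarith)]
    linarith

/-- For a family of `(q+1)`-regular graphs with eigenvalue lists `lam m`,
the Sarnak–Xue density condition `#{i : p_i ≥ p} ≪_ε n^{1-A(1-2/p)+ε}` (for all `p > 2`)
is equivalent to `∑_i n^{-1+A(1-2/p_i)} ≪_ε n^ε`. -/
theorem stmt8 (q : ℕ) (hq : 2 ≤ q) (A : ℝ) (hA0 : 0 < A) (hA1 : A ≤ 1)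
    (V : ℕ → Type) [∀ m, Fintype (V m)] [∀ m, Nonempty (V m)]
    (G : ∀ m, SimpleGraph (V m))
    (hreg : ∀ m, (G m).IsRegularOfDegree (q + 1))
    (lam : ∀ m, Fin (Fintype.card (V m)) → ℝ)
    (hev : ∀ m, ((G m).adjMatrix ℝ).charpoly =
      ∏ i, (Polynomial.X - Polynomial.C (((q : ℝ) + 1) * lam m i))) :
    (∀ p : ℝ, 2 < p → ∀ ε : ℝ, 0 < ε → ∃ C : ℝ, 0 < C ∧ ∀ m,
        ((Finset.univ.filter (fun i => pexp q (lam m i) ≤ 1 / p)).card : ℝ)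
          ≤ C * (Fintype.card (V m) : ℝ) ^ (1 - A * (1 - 2 / p) + ε))
    ↔ (∀ ε : ℝ, 0 < ε → ∃ C : ℝ, 0 < C ∧ ∀ m,
        ∑ i, (Fintype.card (V m) : ℝ) ^ (-1 + A * (1 - 2 * pexp q (lam m i)))
          ≤ C * (Fintype.card (V m) : ℝ) ^ ε) := by
  have hcard : ∀ m, (1 : ℝ) ≤ (Fintype.card (V m) : ℝ) := fun m => by
    exact_mod_cast Fintype.card_pos
  have hnpos : ∀ m, (0 : ℝ) < (Fintype.card (V m) : ℝ) := fun m =>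
    zero_lt_one.trans_le (hcard m)
  have hlam1 : ∀ m i, |lam m i| ≤ 1 := by
    intro m i
    have hroot : ((G m).adjMatrix ℝ).charpoly.IsRoot (((q : ℝ) + 1) * lam m i) := by
      rw [hev m]
      unfold Polynomial.IsRoot
      rw [Polynomial.eval_prod]
      apply Finset.prod_eq_zero (Finset.mem_univ i)
      simp
    have hb := eig_bound (G m) (hreg m) hroot
    have h1 : |((q : ℝ) + 1) * lam m i| = ((q : ℝ) + 1) * |lam m i| := by
      rw [abs_mul, abs_of_nonneg (by positivity : (0:ℝ) ≤ (q : ℝ) + 1)]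
    rw [h1] at hb
    push_cast at hb
    exact le_of_mul_le_mul_left (by rw [mul_one]; exact hb)
      (by positivity : (0:ℝ) < (q : ℝ) + 1)
  have hs0 : ∀ m i, 0 ≤ pexp q (lam m i) := fun m i => (pexp_bounds hq (hlam1 m i)).1
  have hs2 : ∀ m i, pexp q (lam m i) ≤ 1 / 2 := fun m i => (pexp_bounds hq (hlam1 m i)).2
  constructor
  · -- density ⇒ sum bound
    intro h ε hε
    set K := ⌈2 * A / ε⌉₊ with hK
    set δ : ℝ := 1 / (2 * ((K : ℝ) + 1)) with hδdef
    have hδ : (0 : ℝ) < δ := by positivity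
    have hKδ : ((K : ℝ) + 1) * δ = 1 / 2 := by
      rw [hδdef]; field_simp
    have hδε : 2 * A * δ ≤ ε / 2 := by
      have h1 : 2 * A / ε ≤ (K : ℝ) := Nat.le_ceil _
      rw [div_le_iff₀ hε] at h1
      have h2 : 2 * A ≤ ε * ((K : ℝ) + 1) := by nlinarith
      calc 2 * A * δ ≤ (ε * ((K : ℝ) + 1)) * δ := mul_le_mul_of_nonneg_right h2 hδ.le
        _ = ε * (((K : ℝ) + 1) * δ) := by ring
        _ = ε / 2 := by rw [hKδ]; ring
    -- the bucket function
    set g : ∀ m, Fin (Fintype.card (V m)) → ℕ :=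
      fun m i => min K ⌊(1 / 2 - pexp q (lam m i)) / δ⌋₊ with hg
    have hgK : ∀ m i, g m i ∈ Finset.range (K + 1) := by
      intro m i
      simp only [Finset.mem_range, Nat.lt_succ_iff, hg]
      exact min_le_left _ _
    have hgup : ∀ m i, pexp q (lam m i) ≤ 1 / 2 - (g m i : ℝ) * δ := by
      intro m i
      have hx : (0 : ℝ) ≤ (1 / 2 - pexp q (lam m i)) / δ :=
        div_nonneg (by linarith [hs2 m i]) hδ.le
      have h1 : (g m i : ℝ) ≤ (1 / 2 - pexp q (lam m i)) / δ := by
        have h2 : g m i ≤ ⌊(1 / 2 - pexp q (lam m i)) / δ⌋₊ := min_le_right _ _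
        exact_mod_cast (Nat.le_floor_iff hx).mp h2
      rw [le_div_iff₀ hδ] at h1
      linarith
    have hglow : ∀ m i, 1 / 2 - ((g m i : ℝ) + 1) * δ ≤ pexp q (lam m i) := by
      intro m i
      by_cases hc : ⌊(1 / 2 - pexp q (lam m i)) / δ⌋₊ ≤ K
      · have hgeq : g m i = ⌊(1 / 2 - pexp q (lam m i)) / δ⌋₊ := min_eq_right hc
        have h2 : (1 / 2 - pexp q (lam m i)) / δ
            < (⌊(1 / 2 - pexp q (lam m i)) / δ⌋₊ : ℝ) + 1 := Nat.lt_floor_add_one _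
        rw [div_lt_iff₀ hδ] at h2
        rw [hgeq]
        linarith
      · have hgeq : g m i = K := min_eq_left (le_of_not_ge hc)
        rw [hgeq]
        linarith [hKδ, hs0 m i]
    -- per-bucket cardinality bounds
    have hcount : ∀ j : ℕ, ∃ C : ℝ, 0 < C ∧ ∀ m, j ≤ K →
        ((Finset.univ.filter (fun i => g m i = j)).card : ℝ)
          ≤ C * (Fintype.card (V m) : ℝ) ^ (1 - A * (2 * (j : ℝ) * δ) + ε / 2) := by
      intro j
      rcases Nat.eq_zero_or_pos j with rfl | hj
      · refine ⟨1, one_pos, fun m _ => ?_⟩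
        rw [one_mul]
        calc ((Finset.univ.filter (fun i => g m i = 0)).card : ℝ)
            ≤ ((Finset.univ : Finset (Fin (Fintype.card (V m)))).card : ℝ) := by
              exact_mod_cast Finset.card_filter_le _ _
          _ = (Fintype.card (V m) : ℝ) := by simp
          _ = (Fintype.card (V m) : ℝ) ^ (1 : ℝ) := (Real.rpow_one _).symm
          _ ≤ (Fintype.card (V m) : ℝ) ^ (1 - A * (2 * ((0 : ℕ) : ℝ) * δ) + ε / 2) :=
              Real.rpow_le_rpow_of_exponent_le (hcard m) (by push_cast; linarith)
      · by_cases hjK : j ≤ K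
        · have hu : (0 : ℝ) < 1 / 2 - (j : ℝ) * δ := by
            have h1 : (j : ℝ) * δ < ((K : ℝ) + 1) * δ := by
              apply mul_lt_mul_of_pos_right _ hδ
              exact_mod_cast Nat.lt_succ_of_le hjK
            linarith [hKδ]
          have hjpos : (0 : ℝ) < (j : ℝ) * δ := mul_pos (by exact_mod_cast hj) hδ
          have hp : 2 < 1 / (1 / 2 - (j : ℝ) * δ) := by
            rw [lt_div_iff₀ hu]
            linarith
          obtain ⟨C, hC, hCb⟩ := h (1 / (1 / 2 - (j : ℝ) * δ)) hp (ε / 2) (half_pos hε)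
          refine ⟨C, hC, fun m _ => ?_⟩
          have hCm := hCb m
          rw [one_div_one_div] at hCm
          have he : 1 - A * (1 - 2 / (1 / (1 / 2 - (j : ℝ) * δ))) + ε / 2
              = 1 - A * (2 * (j : ℝ) * δ) + ε / 2 := by
            have h2u : (2 : ℝ) / (1 / (1 / 2 - (j : ℝ) * δ)) = 2 * (1 / 2 - (j : ℝ) * δ) := by
              rw [div_div_eq_mul_div, div_one, mul_comm]
            rw [h2u]; ring
          rw [he] at hCm
          refine le_trans ?_ hCm
          have hsub : (Finset.univ.filter (fun i => g m i = j))
              ⊆ (Finset.univ.filter (fun i => pexp q (lam m i) ≤ 1 / 2 - (j : ℝ) * δ)) := by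
            intro i hi
            simp only [Finset.mem_filter, Finset.mem_univ, true_and] at hi ⊢
            have := hgup m i
            rw [hi] at this
            exact this
          exact_mod_cast Finset.card_le_card hsub
        · exact ⟨1, one_pos, fun m hjK' => absurd hjK' hjK⟩
    choose Cf hCf0 hCfb using hcount
    refine ⟨∑ j ∈ Finset.range (K + 1), Cf j,
      Finset.sum_pos (fun j _ => hCf0 j) ⟨0, Finset.mem_range.mpr (Nat.succ_pos K)⟩,
      fun m => ?_⟩
    have hsplit : ∑ i, (Fintype.card (V m) : ℝ) ^ (-1 + A * (1 - 2 * pexp q (lam m i)))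
        = ∑ j ∈ Finset.range (K + 1), ∑ i ∈ Finset.univ.filter (fun i => g m i = j),
            (Fintype.card (V m) : ℝ) ^ (-1 + A * (1 - 2 * pexp q (lam m i))) :=
      (Finset.sum_fiberwise_of_maps_to (fun i _ => hgK m i) _).symm
    rw [hsplit, Finset.sum_mul]
    apply Finset.sum_le_sum
    intro j hjr
    have hjK : j ≤ K := Nat.lt_succ_iff.mp (Finset.mem_range.mp hjr)
    have hbucket : ∑ i ∈ Finset.univ.filter (fun i => g m i = j),
          (Fintype.card (V m) : ℝ) ^ (-1 + A * (1 - 2 * pexp q (lam m i)))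
        ≤ ((Finset.univ.filter (fun i => g m i = j)).card : ℝ)
            * (Fintype.card (V m) : ℝ) ^ (-1 + A * (2 * ((j : ℝ) + 1) * δ)) := by
      rw [← nsmul_eq_mul]
      apply Finset.sum_le_card_nsmul
      intro i hi
      simp only [Finset.mem_filter, Finset.mem_univ, true_and] at hi
      apply Real.rpow_le_rpow_of_exponent_le (hcard m)
      have hl := hglow m i
      rw [hi] at hl
      have h1 : 1 - 2 * pexp q (lam m i) ≤ 2 * ((j : ℝ) + 1) * δ := by linarith
      linarith [mul_le_mul_of_nonneg_left h1 hA0.le]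
    calc ∑ i ∈ Finset.univ.filter (fun i => g m i = j),
          (Fintype.card (V m) : ℝ) ^ (-1 + A * (1 - 2 * pexp q (lam m i)))
        ≤ ((Finset.univ.filter (fun i => g m i = j)).card : ℝ)
            * (Fintype.card (V m) : ℝ) ^ (-1 + A * (2 * ((j : ℝ) + 1) * δ)) := hbucket
      _ ≤ (Cf j * (Fintype.card (V m) : ℝ) ^ (1 - A * (2 * (j : ℝ) * δ) + ε / 2))
            * (Fintype.card (V m) : ℝ) ^ (-1 + A * (2 * ((j : ℝ) + 1) * δ)) :=
          mul_le_mul_of_nonneg_right (hCfb j m hjK) (Real.rpow_nonneg (hnpos m).le _)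
      _ = Cf j * (Fintype.card (V m) : ℝ) ^ ((1 - A * (2 * (j : ℝ) * δ) + ε / 2)
            + (-1 + A * (2 * ((j : ℝ) + 1) * δ))) := by
          rw [mul_assoc, ← Real.rpow_add (hnpos m)]
      _ = Cf j * (Fintype.card (V m) : ℝ) ^ (ε / 2 + 2 * A * δ) := by
          congr 1
          congr 1
          ring
      _ ≤ Cf j * (Fintype.card (V m) : ℝ) ^ ε := by
          apply mul_le_mul_of_nonneg_left _ (hCf0 j).le
          exact Real.rpow_le_rpow_of_exponent_le (hcard m) (by linarith)
  · -- sum bound ⇒ density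
    intro h p hp ε hε
    obtain ⟨C, hC, hCb⟩ := h ε hε
    refine ⟨C, hC, fun m => ?_⟩
    set n : ℝ := (Fintype.card (V m) : ℝ) with hn
    set S := Finset.univ.filter (fun i => pexp q (lam m i) ≤ 1 / p) with hS
    have hkey : (S.card : ℝ) * n ^ (-1 + A * (1 - 2 / p)) ≤ C * n ^ ε := by
      calc (S.card : ℝ) * n ^ (-1 + A * (1 - 2 / p))
          = ∑ _i ∈ S, n ^ (-1 + A * (1 - 2 / p)) := by
            rw [Finset.sum_const, nsmul_eq_mul]
        _ ≤ ∑ i ∈ S, n ^ (-1 + A * (1 - 2 * pexp q (lam m i))) := by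
            apply Finset.sum_le_sum
            intro i hi
            apply Real.rpow_le_rpow_of_exponent_le (hcard m)
            rw [hS, Finset.mem_filter] at hi
            have h2p : (2 : ℝ) / p = 2 * (1 / p) := by ring
            have h1 : 1 - 2 / p ≤ 1 - 2 * pexp q (lam m i) := by
              rw [h2p]; linarith [hi.2]
            linarith [mul_le_mul_of_nonneg_left h1 hA0.le]
        _ ≤ ∑ i, n ^ (-1 + A * (1 - 2 * pexp q (lam m i))) :=
            Finset.sum_le_sum_of_subset_of_nonneg (Finset.filter_subset _ _)
              (fun i _ _ => (Real.rpow_pos_of_pos (hnpos m) _).le)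
        _ ≤ C * n ^ ε := hCb m
    have hmul := mul_le_mul_of_nonneg_right hkey
      (Real.rpow_nonneg (hnpos m).le (1 - A * (1 - 2 / p)))
    calc (S.card : ℝ)
        = (S.card : ℝ) * n ^ (-1 + A * (1 - 2 / p)) * n ^ (1 - A * (1 - 2 / p)) := by
          rw [mul_assoc, ← Real.rpow_add (hnpos m),
            show (-1 + A * (1 - 2 / p)) + (1 - A * (1 - 2 / p)) = 0 by ring,
            Real.rpow_zero, mul_one]
      _ ≤ C * n ^ ε * n ^ (1 - A * (1 - 2 / p)) := hmul
      _ = C * n ^ (1 - A * (1 - 2 / p) + ε) := by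
          rw [mul_assoc, ← Real.rpow_add (hnpos m),
            show ε + (1 - A * (1 - 2 / p)) = 1 - A * (1 - 2 / p) + ε by ring]
end

section
/- Let X be a finite (q+1)-regular non-bipartite graph on n vertices, x₀ a vertex, and A the normalized adjacency operator. For every ε₀ > 0 and every integer k < (1−ε₀)·((q+1)/(q−1))·log_q(n), the total variation distance satisfies ‖A^k δ_{x₀} − π‖₁ = 2 − o_{ε₀}(1) as n → ∞. -/
open scoped Classical
open Filter

section Aux
open Finset SimpleGraph
variable {V : Type} [Fintype V] (q : ℕ) (G : SimpleGraph V) [DecidableRel G.Adj] (x₀ : V)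

noncomputable def pvec (k : ℕ) : V → ℝ :=
  (((((q : ℝ) + 1)⁻¹ • G.adjMatrix ℝ)) ^ k).mulVec (fun z => if z = x₀ then (1:ℝ) else 0)

lemma pvec_zero : pvec q G x₀ 0 = fun z => if z = x₀ then (1:ℝ) else 0 := by
  simp [pvec]

lemma pvec_succ (k : ℕ) (z : V) :
    pvec q G x₀ (k+1) z = ((q : ℝ) + 1)⁻¹ * ∑ y ∈ G.neighborFinset z, pvec q G x₀ k y := by
  simp only [pvec, pow_succ', ← Matrix.mulVec_mulVec, Matrix.smul_mulVec,
    Pi.smul_apply, smul_eq_mul]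
  simp [SimpleGraph.adjMatrix_mulVec_apply]

lemma pvec_nonneg (k : ℕ) (z : V) : 0 ≤ pvec q G x₀ k z := by
  induction k generalizing z with
  | zero => rw [pvec_zero]; positivity
  | succ k ih =>
    rw [pvec_succ]
    have : (0:ℝ) ≤ ((q:ℝ)+1)⁻¹ := by positivity
    exact mul_nonneg this (Finset.sum_nonneg fun y _ => ih y)

lemma sum_pvec (hreg : G.IsRegularOfDegree (q+1)) (k : ℕ) :
    ∑ z, pvec q G x₀ k z = 1 := by
  induction k with
  | zero => rw [pvec_zero]; simp
  | succ k ih =>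
    have hcol : ∀ y : V, ∑ z, (if G.Adj z y then (1:ℝ) else 0) = (q:ℝ) + 1 := by
      intro y
      rw [Finset.sum_boole]
      have : Finset.univ.filter (fun z => G.Adj z y) = G.neighborFinset y := by
        ext z; simp [SimpleGraph.adj_comm]
      rw [this, SimpleGraph.card_neighborFinset_eq_degree, hreg y]
      push_cast; ring
    calc ∑ z, pvec q G x₀ (k+1) z
        = ((q:ℝ)+1)⁻¹ * ∑ z, ∑ y, (if G.Adj z y then (1:ℝ) else 0) * pvec q G x₀ k y := by
          rw [Finset.mul_sum]
          refine Finset.sum_congr rfl fun z _ => ?_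
          rw [pvec_succ]
          congr 1
          rw [SimpleGraph.neighborFinset_eq_filter, Finset.sum_filter]
          exact Finset.sum_congr rfl fun y _ => by split <;> simp
      _ = ((q:ℝ)+1)⁻¹ * ∑ y, (∑ z, (if G.Adj z y then (1:ℝ) else 0)) * pvec q G x₀ k y := by
          rw [Finset.sum_comm]
          simp_rw [Finset.sum_mul]
      _ = 1 := by
          simp_rw [hcol]
          rw [← Finset.mul_sum, ih]
          field_simp

lemma pvec_support (k : ℕ) (z : V) (h : pvec q G x₀ k z ≠ 0) :
    G.Reachable x₀ z ∧ G.dist x₀ z ≤ k := by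
  induction k generalizing z with
  | zero =>
    rw [pvec_zero] at h
    have : z = x₀ := by by_contra hne; simp [hne] at h
    subst this
    exact ⟨Reachable.refl z, by simp [SimpleGraph.dist_self]⟩
  | succ k ih =>
    rw [pvec_succ] at h
    have h2 : ∑ y ∈ G.neighborFinset z, pvec q G x₀ k y ≠ 0 := by
      intro h0; rw [h0, mul_zero] at h; exact h rfl
    obtain ⟨y, hy, hyne⟩ := Finset.exists_ne_zero_of_sum_ne_zero h2
    rw [SimpleGraph.mem_neighborFinset] at hy
    obtain ⟨hr, hd⟩ := ih y hyne
    refine ⟨hr.trans hy.symm.reachable, ?_⟩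
    obtain ⟨p, hp⟩ := hr.exists_walk_length_eq_dist
    calc G.dist x₀ z ≤ (p.concat hy.symm).length := SimpleGraph.dist_le _
      _ = G.dist x₀ y + 1 := by rw [SimpleGraph.Walk.length_concat, hp]
      _ ≤ k + 1 := by omega

end Aux

section Aux2
open Finset SimpleGraph
variable {V : Type} [Fintype V] (q : ℕ) (G : SimpleGraph V) [DecidableRel G.Adj] (x₀ : V)

lemma exists_adj_dist_sub (y : V) (hr : G.Reachable x₀ y) (hne : y ≠ x₀) :
    ∃ w, G.Adj y w ∧ G.dist x₀ w + 1 = G.dist x₀ y := by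
  obtain ⟨p, hp⟩ := hr.exists_walk_length_eq_dist
  have hpos : 0 < G.dist x₀ y := hr.pos_dist_of_ne (Ne.symm hne)
  cases hrev : p.reverse with
  | nil =>
      exfalso
      have := congrArg SimpleGraph.Walk.length hrev
      rw [SimpleGraph.Walk.length_reverse] at this
      simp only [SimpleGraph.Walk.length_nil] at this
      omega
  | @cons _ w _ hadj p' =>
      refine ⟨w, hadj, ?_⟩
      have hlen : p'.length + 1 = G.dist x₀ y := by
        have := congrArg SimpleGraph.Walk.length hrev
        rw [SimpleGraph.Walk.length_reverse] at this
        simp only [SimpleGraph.Walk.length_cons] at this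
        omega
      have h1 : G.dist x₀ w ≤ p'.length := by
        have := SimpleGraph.dist_le p'.reverse
        rwa [SimpleGraph.Walk.length_reverse] at this
      have h2 : G.dist x₀ y ≤ G.dist x₀ w + 1 := by
        obtain ⟨s, hs⟩ := (p'.reverse).reachable.exists_walk_length_eq_dist
        calc G.dist x₀ y ≤ (s.concat hadj.symm).length := SimpleGraph.dist_le _
          _ = G.dist x₀ w + 1 := by rw [SimpleGraph.Walk.length_concat, hs]
      omega

noncomputable def sphere (d : ℕ) : Finset V :=
  Finset.univ.filter (fun y => G.Reachable x₀ y ∧ G.dist x₀ y = d)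

noncomputable def ball (r : ℕ) : Finset V :=
  Finset.univ.filter (fun y => G.Reachable x₀ y ∧ G.dist x₀ y ≤ r)

lemma sphere_zero : sphere G x₀ 0 ⊆ {x₀} := by
  intro y hy
  simp only [sphere, Finset.mem_filter] at hy
  have := (hy.2.1.symm.dist_eq_zero_iff).mp (by rw [SimpleGraph.dist_comm]; exact hy.2.2)
  simp [this.symm]

lemma sphere_one (hreg : G.IsRegularOfDegree (q+1)) : (sphere G x₀ 1).card ≤ q + 1 := by
  have : sphere G x₀ 1 ⊆ G.neighborFinset x₀ := by
    intro y hy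
    simp only [sphere, Finset.mem_filter] at hy
    rw [SimpleGraph.mem_neighborFinset]
    exact SimpleGraph.dist_eq_one_iff_adj.mp hy.2.2
  calc (sphere G x₀ 1).card ≤ (G.neighborFinset x₀).card := Finset.card_le_card this
    _ = q + 1 := by rw [SimpleGraph.card_neighborFinset_eq_degree]; exact hreg x₀

lemma sphere_succ (hreg : G.IsRegularOfDegree (q+1)) (d : ℕ) (hd : 1 ≤ d) :
    (sphere G x₀ (d+1)).card ≤ q * (sphere G x₀ d).card := by
  -- choose for each y in sphere (d+1) a neighbor at distance d
  have hch : ∀ y ∈ sphere G x₀ (d+1), ∃ w, G.Adj y w ∧ G.Reachable x₀ w ∧ G.dist x₀ w = d := by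
    intro y hy
    simp only [sphere, Finset.mem_filter] at hy
    have hne : y ≠ x₀ := by
      intro h; subst h; rw [SimpleGraph.dist_self] at hy; omega
    obtain ⟨w, hadj, hdist⟩ := exists_adj_dist_sub G x₀ y hy.2.1 hne
    refine ⟨w, hadj, hy.2.1.trans hadj.reachable, by omega⟩
  choose g hg1 hg2 hg3 using hch
  -- g maps sphere (d+1) into sphere d
  have hmem : ∀ y (hy : y ∈ sphere G x₀ (d+1)), g y hy ∈ sphere G x₀ d := by
    intro y hy
    simp only [sphere, Finset.mem_filter]
    exact ⟨Finset.mem_univ _, hg2 y hy, hg3 y hy⟩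
  classical
  -- attach and use fiberwise counting
  set f : V → V := fun y => if hy : y ∈ sphere G x₀ (d+1) then g y hy else x₀ with hf
  have hmem' : ∀ y ∈ sphere G x₀ (d+1), f y ∈ sphere G x₀ d := by
    intro y hy; rw [hf]; simp only [dif_pos hy]; exact hmem y hy
  rw [Finset.card_eq_sum_card_fiberwise hmem']
  -- each fiber has at most q elements
  have hfiber : ∀ z ∈ sphere G x₀ d,
      ((sphere G x₀ (d+1)).filter (fun y => f y = z)).card ≤ q := by
    intro z hz
    simp only [sphere, Finset.mem_filter] at hz
    have hzne : z ≠ x₀ := by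
      intro h; subst h; rw [SimpleGraph.dist_self] at hz; omega
    obtain ⟨w, hadj, hdist⟩ := exists_adj_dist_sub G x₀ z hz.2.1 hzne
    have hsub : (sphere G x₀ (d+1)).filter (fun y => f y = z) ⊆
        (G.neighborFinset z).erase w := by
      intro y hy
      rw [Finset.mem_filter] at hy
      obtain ⟨hy1, hy2⟩ := hy
      rw [hf] at hy2
      simp only [dif_pos hy1] at hy2
      have hadjy : G.Adj y z := by rw [← hy2]; exact hg1 y hy1
      rw [Finset.mem_erase, SimpleGraph.mem_neighborFinset]
      refine ⟨?_, hadjy.symm⟩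
      intro h
      subst h
      simp only [sphere, Finset.mem_filter] at hy1
      omega
    calc _ ≤ ((G.neighborFinset z).erase w).card := Finset.card_le_card hsub
      _ = (G.neighborFinset z).card - 1 := by
          rw [Finset.card_erase_of_mem (by rwa [SimpleGraph.mem_neighborFinset])]
      _ ≤ q := by rw [SimpleGraph.card_neighborFinset_eq_degree, hreg z]; omega
  calc ∑ z ∈ sphere G x₀ d, ((sphere G x₀ (d+1)).filter (fun y => f y = z)).card
      ≤ ∑ _z ∈ sphere G x₀ d, q := Finset.sum_le_sum hfiber
    _ = q * (sphere G x₀ d).card := by rw [Finset.sum_const, smul_eq_mul, mul_comm]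

lemma sphere_card (hreg : G.IsRegularOfDegree (q+1)) (hq : 2 ≤ q) (d : ℕ) (hd : 1 ≤ d) :
    (sphere G x₀ d).card ≤ (q+1) * q ^ (d-1) := by
  induction d with
  | zero => omega
  | succ d ih =>
    rcases Nat.eq_or_lt_of_le hd with h | h
    · have : d = 0 := by omega
      subst this
      simpa using sphere_one q G x₀ hreg
    · obtain ⟨d', rfl⟩ : ∃ d', d = d' + 1 := ⟨d - 1, by omega⟩
      calc (sphere G x₀ (d'+1+1)).card ≤ q * (sphere G x₀ (d'+1)).card :=
            sphere_succ q G x₀ hreg _ (by omega)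
        _ ≤ q * ((q+1) * q ^ (d'+1-1)) := Nat.mul_le_mul_left q (ih (by omega))
        _ = (q+1) * q ^ (d'+1+1-1) := by simp; ring

lemma ball_card (hreg : G.IsRegularOfDegree (q+1)) (hq : 2 ≤ q) (r : ℕ) :
    (_root_.ball G x₀ r).card ≤ 4 * q ^ r := by
  induction r with
  | zero =>
    have : _root_.ball G x₀ 0 ⊆ {x₀} := by
      intro y hy
      simp only [_root_.ball, Finset.mem_filter] at hy
      refine sphere_zero G x₀ ?_
      simp only [sphere, Finset.mem_filter]
      exact ⟨Finset.mem_univ _, hy.2.1, by omega⟩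
    calc (_root_.ball G x₀ 0).card ≤ 1 := by simpa using Finset.card_le_card this
      _ ≤ 4 * q ^ 0 := by norm_num
  | succ r ih =>
    have hsplit : _root_.ball G x₀ (r+1) ⊆ _root_.ball G x₀ r ∪ sphere G x₀ (r+1) := by
      intro y hy
      simp only [_root_.ball, sphere, Finset.mem_filter, Finset.mem_union] at hy ⊢
      rcases Nat.lt_or_ge (G.dist x₀ y) (r+1) with h | h
      · exact Or.inl ⟨Finset.mem_univ _, hy.2.1, by omega⟩
      · exact Or.inr ⟨Finset.mem_univ _, hy.2.1, by omega⟩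
    calc (_root_.ball G x₀ (r+1)).card ≤ (_root_.ball G x₀ r ∪ sphere G x₀ (r+1)).card :=
          Finset.card_le_card hsplit
      _ ≤ (_root_.ball G x₀ r).card + (sphere G x₀ (r+1)).card := Finset.card_union_le _ _
      _ ≤ 4 * q ^ r + (q+1) * q ^ r := by
          have := sphere_card q G x₀ hreg hq (r+1) (by omega)
          simpa using Nat.add_le_add ih this
      _ ≤ 4 * q ^ (r+1) := by
          have h1 : q ^ (r+1) = q * q ^ r := by ring
          rw [h1]
          nlinarith [Nat.one_le_two_pow (n := r), pow_pos (by omega : 0 < q) r]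

end Aux2

section Phi
open Finset SimpleGraph
variable {V : Type} [Fintype V] (q : ℕ) (G : SimpleGraph V) [DecidableRel G.Adj] (x₀ : V)

noncomputable def phi (lam : ℝ) (k : ℕ) : ℝ :=
  ∑ y, pvec q G x₀ k y * lam ^ (G.dist x₀ y)

lemma phi_zero (lam : ℝ) : phi q G x₀ lam 0 = 1 := by
  rw [phi]
  rw [Finset.sum_eq_single x₀]
  · rw [pvec_zero]; simp [SimpleGraph.dist_self]
  · intro y _ hy; rw [pvec_zero]; simp [hy]
  · intro h; exact absurd (Finset.mem_univ x₀) h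

lemma phi_succ_le (hreg : G.IsRegularOfDegree (q+1)) (lam : ℝ) (hlam : 1 ≤ lam) (k : ℕ) :
    phi q G x₀ lam (k+1) ≤
      ((q*lam + lam⁻¹)/((q:ℝ)+1)) * phi q G x₀ lam k + lam := by
  have hlam0 : (0:ℝ) < lam := by linarith
  have hq1 : (0:ℝ) < (q:ℝ) + 1 := by positivity
  -- rewrite phi (k+1) as a double sum and swap
  have hswap : phi q G x₀ lam (k+1)
      = ((q:ℝ)+1)⁻¹ * ∑ y, pvec q G x₀ k y * ∑ z ∈ G.neighborFinset y, lam ^ (G.dist x₀ z) := by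
    rw [phi]
    have : ∀ z : V, pvec q G x₀ (k+1) z * lam ^ (G.dist x₀ z)
        = ((q:ℝ)+1)⁻¹ * ∑ y, (if G.Adj z y then (1:ℝ) else 0) * (pvec q G x₀ k y * lam ^ (G.dist x₀ z)) := by
      intro z
      rw [pvec_succ, mul_assoc]
      congr 1
      rw [Finset.sum_mul, SimpleGraph.neighborFinset_eq_filter, Finset.sum_filter]
      exact Finset.sum_congr rfl fun y _ => by split <;> simp
    simp_rw [this]
    rw [← Finset.mul_sum, Finset.sum_comm]
    congr 1
    refine Finset.sum_congr rfl fun y _ => ?_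
    rw [SimpleGraph.neighborFinset_eq_filter, Finset.sum_filter, Finset.mul_sum]
    refine Finset.sum_congr rfl fun z _ => ?_
    by_cases h : G.Adj y z
    · rw [if_pos h, if_pos h.symm]; ring
    · rw [if_neg h, if_neg (fun hc => h hc.symm)]; ring
  rw [hswap]
  -- termwise bound
  have hterm : ∀ y : V,
      pvec q G x₀ k y * ∑ z ∈ G.neighborFinset y, lam ^ (G.dist x₀ z)
      ≤ pvec q G x₀ k y * ((q*lam + lam⁻¹) * lam ^ (G.dist x₀ y))
        + (if y = x₀ then ((q:ℝ)+1) * lam * pvec q G x₀ k y else 0) := by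
    intro y
    by_cases hp : pvec q G x₀ k y = 0
    · rw [hp]; simp
    have hpn : 0 ≤ pvec q G x₀ k y := pvec_nonneg q G x₀ k y
    obtain ⟨hreach, _⟩ := pvec_support q G x₀ k y hp
    by_cases hy : y = x₀
    · have hd0 : G.dist x₀ y = 0 := by rw [hy, SimpleGraph.dist_self]
      have hW : ∑ z ∈ G.neighborFinset y, lam ^ (G.dist x₀ z) ≤ ((q:ℝ)+1) * lam := by
        have hb : ∀ z ∈ G.neighborFinset y, lam ^ (G.dist x₀ z) ≤ lam := by
          intro z hz
          rw [SimpleGraph.mem_neighborFinset] at hz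
          have hxz : G.Adj x₀ z := by rwa [← hy]
          rw [SimpleGraph.dist_eq_one_iff_adj.mpr hxz, pow_one]
        calc ∑ z ∈ G.neighborFinset y, lam ^ (G.dist x₀ z)
            ≤ ∑ _z ∈ G.neighborFinset y, lam := Finset.sum_le_sum hb
          _ = ((q:ℝ)+1) * lam := by
              rw [Finset.sum_const, nsmul_eq_mul, SimpleGraph.card_neighborFinset_eq_degree,
                hreg y]
              push_cast; ring
      rw [if_pos hy, hd0, pow_zero, mul_one]
      have h1 : (0:ℝ) ≤ pvec q G x₀ k y * (q*lam + lam⁻¹) :=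
        mul_nonneg hpn (by positivity)
      nlinarith [mul_le_mul_of_nonneg_left hW hpn]
    · -- y ≠ x₀, reachable, dist ≥ 1
      have hdpos : 1 ≤ G.dist x₀ y := hreach.pos_dist_of_ne (Ne.symm hy)
      obtain ⟨w, hadj, hdw⟩ := exists_adj_dist_sub G x₀ y hreach hy
      have hw : w ∈ G.neighborFinset y := by rwa [SimpleGraph.mem_neighborFinset]
      have hW : ∑ z ∈ G.neighborFinset y, lam ^ (G.dist x₀ z)
          ≤ (q*lam + lam⁻¹) * lam ^ (G.dist x₀ y) := by
        rw [← Finset.add_sum_erase _ _ hw]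
        have h1 : lam ^ (G.dist x₀ w) = lam⁻¹ * lam ^ (G.dist x₀ y) := by
          rw [← hdw, pow_succ]
          field_simp
        have h2 : ∀ z ∈ (G.neighborFinset y).erase w,
            lam ^ (G.dist x₀ z) ≤ lam * lam ^ (G.dist x₀ y) := by
          intro z hz
          rw [Finset.mem_erase, SimpleGraph.mem_neighborFinset] at hz
          have hdz : G.dist x₀ z ≤ G.dist x₀ y + 1 := by
            obtain ⟨p, hp⟩ := hreach.exists_walk_length_eq_dist
            calc G.dist x₀ z ≤ (p.concat hz.2).length := SimpleGraph.dist_le _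
              _ = G.dist x₀ y + 1 := by rw [SimpleGraph.Walk.length_concat, hp]
          calc lam ^ (G.dist x₀ z) ≤ lam ^ (G.dist x₀ y + 1) :=
                pow_le_pow_right₀ hlam hdz
            _ = lam * lam ^ (G.dist x₀ y) := by rw [pow_succ]; ring
        have h3 : ((G.neighborFinset y).erase w).card = q := by
          rw [Finset.card_erase_of_mem hw, SimpleGraph.card_neighborFinset_eq_degree, hreg y]
          omega
        calc lam ^ (G.dist x₀ w) + ∑ z ∈ (G.neighborFinset y).erase w, lam ^ (G.dist x₀ z)
            ≤ lam⁻¹ * lam ^ (G.dist x₀ y) + ∑ _z ∈ (G.neighborFinset y).erase w, lam * lam ^ (G.dist x₀ y) := by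
              rw [h1]
              exact add_le_add le_rfl (Finset.sum_le_sum h2)
          _ = (q*lam + lam⁻¹) * lam ^ (G.dist x₀ y) := by
              rw [Finset.sum_const, h3, nsmul_eq_mul]; ring
      simp only [if_neg hy, add_zero]
      exact mul_le_mul_of_nonneg_left hW hpn
  calc ((q:ℝ)+1)⁻¹ * ∑ y, pvec q G x₀ k y * ∑ z ∈ G.neighborFinset y, lam ^ (G.dist x₀ z)
      ≤ ((q:ℝ)+1)⁻¹ * ∑ y, (pvec q G x₀ k y * ((q*lam + lam⁻¹) * lam ^ (G.dist x₀ y))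
          + (if y = x₀ then ((q:ℝ)+1) * lam * pvec q G x₀ k y else 0)) := by
        apply mul_le_mul_of_nonneg_left (Finset.sum_le_sum fun y _ => hterm y) (by positivity)
    _ = ((q:ℝ)+1)⁻¹ * ((q*lam + lam⁻¹) * phi q G x₀ lam k
          + ((q:ℝ)+1) * lam * pvec q G x₀ k x₀) := by
        congr 1
        rw [Finset.sum_add_distrib, Finset.sum_ite_eq' Finset.univ x₀]
        simp only [Finset.mem_univ, if_pos]
        congr 1
        rw [phi, Finset.mul_sum]
        exact Finset.sum_congr rfl fun y _ => by ring
    _ = ((q*lam + lam⁻¹)/((q:ℝ)+1)) * phi q G x₀ lam k + lam * pvec q G x₀ k x₀ := by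
        have hne : ((q:ℝ)+1) ≠ 0 := by positivity
        field_simp
    _ ≤ ((q*lam + lam⁻¹)/((q:ℝ)+1)) * phi q G x₀ lam k + lam := by
        have hx : pvec q G x₀ k x₀ ≤ 1 := by
          have hne : Nonempty V := ⟨x₀⟩
          rw [← sum_pvec q G x₀ hreg k]
          exact Finset.single_le_sum (fun y _ => pvec_nonneg q G x₀ k y) (Finset.mem_univ x₀)
        have : lam * pvec q G x₀ k x₀ ≤ lam * 1 := by
          apply mul_le_mul_of_nonneg_left hx (by linarith)
        linarith

lemma mu_ge_one (lam : ℝ) (hlam : 1 ≤ lam) (hq : 1 ≤ q) :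
    (1:ℝ) ≤ (q*lam + lam⁻¹)/((q:ℝ)+1) := by
  have hlam0 : (0:ℝ) < lam := by linarith
  rw [le_div_iff₀ (by positivity)]
  have h1 : lam⁻¹ * lam = 1 := inv_mul_cancel₀ (by linarith)
  have h2 : lam⁻¹ ≤ 1 := by
    rw [inv_le_one_iff₀]; right; exact hlam
  have hq1 : (1:ℝ) ≤ (q:ℝ) := by exact_mod_cast hq
  nlinarith

lemma phi_le (hreg : G.IsRegularOfDegree (q+1)) (hq : 1 ≤ q) (lam : ℝ) (hlam : 1 ≤ lam) (k : ℕ) :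
    phi q G x₀ lam k ≤ (1 + k*lam) * ((q*lam + lam⁻¹)/((q:ℝ)+1))^k := by
  set mu := (q*lam + lam⁻¹)/((q:ℝ)+1) with hmu
  have hmu1 : 1 ≤ mu := mu_ge_one q lam hlam hq
  induction k with
  | zero => rw [phi_zero]; simp
  | succ k ih =>
    have hmup : (1:ℝ) ≤ mu ^ (k+1) := one_le_pow₀ hmu1
    calc phi q G x₀ lam (k+1) ≤ mu * phi q G x₀ lam k + lam := phi_succ_le q G x₀ hreg lam hlam k
      _ ≤ mu * ((1 + k*lam) * mu^k) + lam := by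
          have := mul_le_mul_of_nonneg_left ih (by linarith : (0:ℝ) ≤ mu)
          linarith
      _ = (1 + k*lam) * mu^(k+1) + lam := by ring
      _ ≤ (1 + (k+1:ℕ)*lam) * mu^(k+1) := by
          have h1 : lam * 1 ≤ lam * mu^(k+1) := by
            apply mul_le_mul_of_nonneg_left hmup (by linarith)
          have h2 : (0:ℝ) ≤ (k:ℝ) * lam := by positivity
          push_cast
          nlinarith

lemma tail_le (hreg : G.IsRegularOfDegree (q+1)) (hq : 1 ≤ q) (lam : ℝ) (hlam : 1 ≤ lam)
    (k r : ℕ) :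
    ∑ y ∈ (_root_.ball G x₀ r)ᶜ, pvec q G x₀ k y
      ≤ (1 + k*lam) * ((q*lam + lam⁻¹)/((q:ℝ)+1))^k / lam^r := by
  have hlam0 : (0:ℝ) < lam := by linarith
  have hlr : (0:ℝ) < lam ^ r := by positivity
  rw [div_eq_inv_mul, ← mul_le_mul_iff_right₀ hlr, ← mul_assoc, mul_inv_cancel₀ (ne_of_gt hlr), one_mul,
    Finset.mul_sum]
  calc ∑ y ∈ (_root_.ball G x₀ r)ᶜ, lam ^ r * pvec q G x₀ k y
      ≤ ∑ y ∈ (_root_.ball G x₀ r)ᶜ, pvec q G x₀ k y * lam ^ (G.dist x₀ y) := by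
        apply Finset.sum_le_sum
        intro y hy
        by_cases hp : pvec q G x₀ k y = 0
        · rw [hp]; simp
        obtain ⟨hreach, _⟩ := pvec_support q G x₀ k y hp
        have hd : r < G.dist x₀ y := by
          by_contra hcon
          push_neg at hcon
          have : y ∈ _root_.ball G x₀ r := by
            simp only [_root_.ball, Finset.mem_filter]
            exact ⟨Finset.mem_univ _, hreach, hcon⟩
          rw [Finset.mem_compl] at hy
          exact hy this
        have := pow_le_pow_right₀ hlam (le_of_lt hd)
        have hpn := pvec_nonneg q G x₀ k y
        nlinarith
    _ ≤ phi q G x₀ lam k := by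
        rw [phi, ← Finset.sum_add_sum_compl (_root_.ball G x₀ r)]
        have h0 : (0:ℝ) ≤ ∑ y ∈ _root_.ball G x₀ r, pvec q G x₀ k y * lam ^ (G.dist x₀ y) := by
          apply Finset.sum_nonneg
          intro y _
          have := pvec_nonneg q G x₀ k y
          positivity
        linarith
    _ ≤ (1 + k*lam) * ((q*lam + lam⁻¹)/((q:ℝ)+1))^k := phi_le q G x₀ hreg hq lam hlam k

end Phi

section Assembly
open Finset SimpleGraph
variable {V : Type} [Fintype V]

lemma TV_bounds (q : ℕ) (hq : 2 ≤ q) (G : SimpleGraph V) [DecidableRel G.Adj]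
    (hreg : G.IsRegularOfDegree (q+1)) (x₀ : V)
    (lam : ℝ) (hlam : 1 ≤ lam) (k r : ℕ) :
    2 - 2 * ((1 + k*lam) * ((q*lam + lam⁻¹)/((q:ℝ)+1))^k / lam^r)
      - 2 * (4 * (q:ℝ)^r / (Fintype.card V : ℝ))
      ≤ ∑ y, |pvec q G x₀ k y - 1/(Fintype.card V : ℝ)|
    ∧ ∑ y, |pvec q G x₀ k y - 1/(Fintype.card V : ℝ)| ≤ 2 := by
  have hx : Nonempty V := ⟨x₀⟩
  have hn : 0 < (Fintype.card V : ℝ) := by exact_mod_cast Fintype.card_pos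
  set n : ℝ := (Fintype.card V : ℝ) with hndef
  set u : ℝ := 1 / n with hu
  have hu0 : 0 ≤ u := by positivity
  have hnu : n * u = 1 := by rw [hu]; field_simp
  have hsumu : ∑ _y : V, u = 1 := by
    rw [Finset.sum_const, nsmul_eq_mul, Finset.card_univ, ← hndef, hnu]
  constructor
  · -- lower bound
    set A := _root_.ball G x₀ r with hA
    have hTnn : 0 ≤ ∑ y ∈ Aᶜ, pvec q G x₀ k y :=
      Finset.sum_nonneg fun y _ => pvec_nonneg q G x₀ k y
    have htail := tail_le q G x₀ hreg (by omega) lam hlam k r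
    have hcardA : ((A.card : ℝ)) ≤ 4 * (q:ℝ)^r := by
      exact_mod_cast ball_card q G x₀ hreg hq r
    have hsplit : (∑ y ∈ A, pvec q G x₀ k y) + ∑ y ∈ Aᶜ, pvec q G x₀ k y = 1 := by
      rw [Finset.sum_add_sum_compl, sum_pvec q G x₀ hreg k]
    have hcards : (A.card : ℝ) + (Aᶜ.card : ℝ) = n := by
      rw [hndef]; exact_mod_cast congrArg (Nat.cast : ℕ → ℝ) (Finset.card_add_card_compl A)
    have step1 : (∑ y ∈ A, (pvec q G x₀ k y - u)) + ∑ y ∈ Aᶜ, (u - pvec q G x₀ k y)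
        ≤ ∑ y, |pvec q G x₀ k y - u| := by
      rw [← Finset.sum_add_sum_compl A (fun y => |pvec q G x₀ k y - u|)]
      refine add_le_add (Finset.sum_le_sum fun y _ => le_abs_self _)
        (Finset.sum_le_sum fun y _ => ?_)
      rw [abs_sub_comm]
      exact le_abs_self _
    have step2 : (∑ y ∈ A, (pvec q G x₀ k y - u)) + ∑ y ∈ Aᶜ, (u - pvec q G x₀ k y)
        = (∑ y ∈ A, pvec q G x₀ k y) - (A.card : ℝ) * u
          + ((Aᶜ.card : ℝ) * u - ∑ y ∈ Aᶜ, pvec q G x₀ k y) := by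
      rw [Finset.sum_sub_distrib, Finset.sum_sub_distrib, Finset.sum_const, Finset.sum_const,
        nsmul_eq_mul, nsmul_eq_mul]
    have hAu : (A.card : ℝ) * u ≤ 4 * (q:ℝ)^r * u := mul_le_mul_of_nonneg_right hcardA hu0
    have h4q : 4 * (q:ℝ)^r * u = 4 * (q:ℝ)^r / n := by rw [hu]; ring
    calc 2 - 2 * ((1 + k*lam) * ((q*lam + lam⁻¹)/((q:ℝ)+1))^k / lam^r) - 2 * (4 * (q:ℝ)^r / n)
        ≤ (∑ y ∈ A, (pvec q G x₀ k y - u)) + ∑ y ∈ Aᶜ, (u - pvec q G x₀ k y) := by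
          rw [step2]
          nlinarith [htail, hAu, hsplit, hcards, hnu]
      _ ≤ ∑ y, |pvec q G x₀ k y - u| := step1
  · calc ∑ y, |pvec q G x₀ k y - u|
        ≤ ∑ y, (pvec q G x₀ k y + u) := by
          refine Finset.sum_le_sum fun y _ => ?_
          have h1 := pvec_nonneg q G x₀ k y
          rw [abs_le]
          constructor <;> linarith
      _ = 2 := by
          rw [Finset.sum_add_distrib, sum_pvec q G x₀ hreg k, hsumu]
          norm_num

end Assembly

section Analytic
open Finset SimpleGraph

set_option maxHeartbeats 1600000 in
lemma errA (q : ℕ) (hq : 2 ≤ q) (ε₀ L : ℝ) (hε : 0 < ε₀) (hε1 : ε₀ < 1) (hL : 0 < L)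
    (k : ℕ) (hk : (k:ℝ) < (1-ε₀) * (((q:ℝ)+1)/((q:ℝ)-1)) * L) :
    (1 + (k:ℝ)*(1+ε₀/4)) * (((q:ℝ)*(1+ε₀/4) + (1+ε₀/4)⁻¹)/((q:ℝ)+1))^k
        / (1+ε₀/4)^(⌊(1-ε₀/2)*L⌋₊)
      ≤ (1 + 3*L*(1+ε₀/4)) * (1+ε₀/4) * Real.exp (-(ε₀^3/32)*L) := by
  have hq2 : (2:ℝ) ≤ (q:ℝ) := by exact_mod_cast hq
  set t : ℝ := ε₀/4 with ht
  have ht0 : 0 < t := by positivity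
  have ht1 : t < 1/4 := by rw [ht]; linarith
  set lam : ℝ := 1 + t with hlam
  have hlam1 : 1 < lam := by rw [hlam]; linarith
  have hlam0 : 0 < lam := by linarith
  set mu : ℝ := ((q:ℝ)*lam + lam⁻¹)/((q:ℝ)+1) with hmu
  have hmu1 : 1 ≤ mu := mu_ge_one q lam (le_of_lt hlam1) (by omega)
  set a : ℝ := mu - 1 with ha
  have ha0 : 0 ≤ a := by linarith
  have hinvlam : lam * lam⁻¹ = 1 := mul_inv_cancel₀ (ne_of_gt hlam0)
  have hinv_le : lam⁻¹ ≤ 1 - t + t^2 := by nlinarith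
  have hinv_ge : lam⁻¹ ≥ 1 - t := by nlinarith
  have hqm0 : (0:ℝ) < (q:ℝ) - 1 := by linarith
  have hqp0 : (0:ℝ) < (q:ℝ) + 1 := by linarith
  have hqm0' : ((q:ℝ) - 1) ≠ 0 := ne_of_gt hqm0
  have hqp0' : ((q:ℝ) + 1) ≠ 0 := ne_of_gt hqp0
  -- bound on a
  have haq : a * ((q:ℝ)+1) = (q:ℝ)*lam + lam⁻¹ - ((q:ℝ)+1) := by
    rw [ha, hmu]
    field_simp
  have ha_le : a ≤ t * ((q:ℝ)-1+t)/((q:ℝ)+1) := by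
    rw [le_div_iff₀ hqp0, haq]
    nlinarith
  -- bound on (q+1)/(q-1) * a
  have hc1 : (((q:ℝ)+1)/((q:ℝ)-1)) * a ≤ t*(1+t) := by
    rw [div_mul_eq_mul_div, div_le_iff₀ hqm0]
    have h3 : ((q:ℝ)+1) * a ≤ ((q:ℝ)+1) * (t * ((q:ℝ)-1+t)/((q:ℝ)+1)) :=
      mul_le_mul_of_nonneg_left ha_le (le_of_lt hqp0)
    have he : ((q:ℝ)+1) * (t * ((q:ℝ)-1+t)/((q:ℝ)+1)) = t * ((q:ℝ)-1+t) := by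
      field_simp
    rw [he] at h3
    nlinarith [sq_nonneg t]
  -- log lower bound
  have hlog_pos : 0 < Real.log lam := Real.log_pos hlam1
  have hlog_ge : t*(1-t) ≤ Real.log lam := by
    have h := Real.log_le_sub_one_of_pos (show (0:ℝ) < lam⁻¹ by positivity)
    rw [Real.log_inv] at h
    nlinarith
  -- key gap inequality
  have hgap : (1-ε₀)*(t*(1+t)) + ε₀^3/32 ≤ (1-ε₀/2)*(t*(1-t)) := by
    rw [ht]; nlinarith [sq_nonneg ε₀, hε.le]
  -- k * a bound
  have hka : (k:ℝ) * a ≤ (1-ε₀)*(t*(1+t)) * L := by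
    have h1 : (k:ℝ) * a ≤ ((1-ε₀) * (((q:ℝ)+1)/((q:ℝ)-1)) * L) * a := by
      apply mul_le_mul_of_nonneg_right (le_of_lt hk) ha0
    have h2 : ((1-ε₀) * (((q:ℝ)+1)/((q:ℝ)-1)) * L) * a
        = ((1-ε₀)*L) * ((((q:ℝ)+1)/((q:ℝ)-1)) * a) := by ring
    have h3 : ((1-ε₀)*L) * ((((q:ℝ)+1)/((q:ℝ)-1)) * a) ≤ ((1-ε₀)*L) * (t*(1+t)) := by
      apply mul_le_mul_of_nonneg_left hc1 (by nlinarith)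
    calc (k:ℝ) * a ≤ ((1-ε₀) * (((q:ℝ)+1)/((q:ℝ)-1)) * L) * a := h1
      _ = ((1-ε₀)*L) * ((((q:ℝ)+1)/((q:ℝ)-1)) * a) := h2
      _ ≤ ((1-ε₀)*L) * (t*(1+t)) := h3
      _ = (1-ε₀)*(t*(1+t)) * L := by ring
  -- k ≤ 3 L
  have hk3 : (k:ℝ) ≤ 3 * L := by
    have h1 : (((q:ℝ)+1)/((q:ℝ)-1)) ≤ 3 := by
      rw [div_le_iff₀ (by linarith)]
      nlinarith
    have h2 : (1-ε₀) * (((q:ℝ)+1)/((q:ℝ)-1)) * L ≤ 3 * L := by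
      have hd0 : 0 ≤ (((q:ℝ)+1)/((q:ℝ)-1)) := div_nonneg (by linarith) (by linarith)
      have hDL : 0 ≤ (((q:ℝ)+1)/((q:ℝ)-1)) * L := mul_nonneg hd0 hL.le
      calc (1-ε₀) * (((q:ℝ)+1)/((q:ℝ)-1)) * L
          = (1-ε₀) * ((((q:ℝ)+1)/((q:ℝ)-1)) * L) := by ring
        _ ≤ 1 * ((((q:ℝ)+1)/((q:ℝ)-1)) * L) := mul_le_mul_of_nonneg_right (by linarith) hDL
        _ = (((q:ℝ)+1)/((q:ℝ)-1)) * L := by ring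
        _ ≤ 3 * L := mul_le_mul_of_nonneg_right h1 hL.le
    linarith
  set r : ℕ := ⌊(1-ε₀/2)*L⌋₊ with hr
  have hr1 : (1-ε₀/2)*L - 1 ≤ (r:ℝ) := by
    have := Nat.lt_floor_add_one ((1-ε₀/2)*L)
    rw [← hr] at this
    linarith
  -- mu^k ≤ exp (k*a)
  have hmuk : mu ^ k ≤ Real.exp ((k:ℝ)*a) := by
    have h1 : mu ≤ Real.exp a := by
      have := Real.add_one_le_exp a
      rw [ha] at this ⊢
      linarith
    calc mu ^ k ≤ (Real.exp a) ^ k := pow_le_pow_left₀ (by linarith) h1 k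
      _ = Real.exp ((k:ℝ)*a) := (Real.exp_nat_mul a k).symm
  -- lam^r = exp (r * log lam)
  have hlamr : lam ^ r = Real.exp ((r:ℝ) * Real.log lam) := by
    rw [Real.exp_nat_mul, Real.exp_log hlam0]
  have hrlog : ((1-ε₀/2)*L - 1) * Real.log lam ≤ (r:ℝ) * Real.log lam :=
    mul_le_mul_of_nonneg_right hr1 (le_of_lt hlog_pos)
  have hexp_bound : (k:ℝ)*a - (r:ℝ)*Real.log lam ≤ -(ε₀^3/32)*L + Real.log lam := by
    have h1 : (1-ε₀/2)*(t*(1-t))*L ≤ (1-ε₀/2)*Real.log lam * L := by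
      have : (1-ε₀/2)*(t*(1-t)) ≤ (1-ε₀/2)*Real.log lam := by nlinarith
      nlinarith
    have h2 : ((1-ε₀/2)*L - 1) * Real.log lam = (1-ε₀/2)*Real.log lam * L - Real.log lam := by
      ring
    nlinarith
  -- put it together
  have hpos1 : (0:ℝ) ≤ 1 + (k:ℝ)*lam := by positivity
  calc (1 + (k:ℝ)*lam) * mu^k / lam^r
      ≤ (1 + (k:ℝ)*lam) * Real.exp ((k:ℝ)*a) / Real.exp ((r:ℝ)*Real.log lam) := by
        rw [hlamr]
        gcongr
    _ = (1 + (k:ℝ)*lam) * Real.exp ((k:ℝ)*a - (r:ℝ)*Real.log lam) := by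
        rw [Real.exp_sub]; ring
    _ ≤ (1 + 3*L*lam) * Real.exp (-(ε₀^3/32)*L + Real.log lam) := by
        apply mul_le_mul
        · nlinarith
        · exact Real.exp_le_exp.mpr hexp_bound
        · positivity
        · nlinarith
    _ = (1 + 3*L*lam) * lam * Real.exp (-(ε₀^3/32)*L) := by
        rw [Real.exp_add, Real.exp_log hlam0]; ring

lemma errB (q : ℕ) (hq : 2 ≤ q) (ε₀ : ℝ) (hε : 0 < ε₀) (hε1 : ε₀ < 1)
    (n : ℝ) (hn : 1 < n) :
    4*(q:ℝ)^(⌊(1-ε₀/2)*Real.logb q n⌋₊)/n ≤ 4 * n ^ (-(ε₀/2):ℝ) := by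
  have hq2 : (2:ℝ) ≤ (q:ℝ) := by exact_mod_cast hq
  have hn0 : (0:ℝ) < n := by linarith
  set L : ℝ := Real.logb q n with hL
  have hL0 : 0 ≤ L := Real.logb_nonneg (by linarith) (by linarith)
  have hcoef : (0:ℝ) ≤ (1-ε₀/2) := by linarith
  set r : ℕ := ⌊(1-ε₀/2)*L⌋₊ with hr
  have hrle : (r:ℝ) ≤ (1-ε₀/2)*L := Nat.floor_le (by positivity)
  have h1 : (q:ℝ)^r ≤ n ^ ((1-ε₀/2):ℝ) := by
    have e1 : (q:ℝ)^r = (q:ℝ) ^ ((r:ℝ)) := by rw [Real.rpow_natCast]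
    rw [e1]
    calc (q:ℝ) ^ ((r:ℝ)) ≤ (q:ℝ) ^ ((1-ε₀/2)*L) :=
          Real.rpow_le_rpow_of_exponent_le (by linarith) hrle
      _ = ((q:ℝ) ^ L) ^ ((1-ε₀/2):ℝ) := by
          rw [← Real.rpow_mul (by linarith), mul_comm]
      _ = n ^ ((1-ε₀/2):ℝ) := by
          rw [hL, Real.rpow_logb (by linarith) (by linarith) hn0]
  have h2 : n ^ (-(ε₀/2):ℝ) = n ^ ((1-ε₀/2):ℝ) / n := by
    rw [show (-(ε₀/2):ℝ) = (1-ε₀/2) - 1 by ring, Real.rpow_sub hn0, Real.rpow_one]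
  calc 4*(q:ℝ)^r/n ≤ 4 * (n ^ ((1-ε₀/2):ℝ)) / n := by
        gcongr
    _ = 4 * n ^ (-(ε₀/2):ℝ) := by rw [mul_div_assoc, ← h2]

end Analytic


set_option maxHeartbeats 1600000

/-- For a family of `(q+1)`-regular non-bipartite graphs with `n → ∞`,
for every `ε₀ > 0`, every choice of base vertices, and every
`k < (1-ε₀)((q+1)/(q-1)) log_q n`, the L¹ distance `‖A^k δ_{x₀} − π‖₁` is
`2 − o_{ε₀}(1)`, i.e. it tends to `2`. -/
theorem stmt11 (q : ℕ) (hq : 2 ≤ q) (V : ℕ → Type) [∀ m, Fintype (V m)]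
    (G : ∀ m, SimpleGraph (V m))
    (hreg : ∀ m, (G m).IsRegularOfDegree (q + 1))
    (hnb : ∀ m, ¬ (G m).Colorable 2)
    (hcard : Tendsto (fun m => Fintype.card (V m)) atTop atTop) :
    ∀ ε₀ : ℝ, 0 < ε₀ → ∀ (x : ∀ m, V m) (k : ℕ → ℕ),
      (∀ m, (k m : ℝ) <
        (1 - ε₀) * (((q : ℝ) + 1) / ((q : ℝ) - 1)) * Real.logb q (Fintype.card (V m))) →
      Tendsto (fun m => ∑ y,
          |((((q : ℝ) + 1)⁻¹ • (G m).adjMatrix ℝ) ^ (k m)).mulVec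
              (fun z => if z = x m then (1 : ℝ) else 0) y
            - 1 / (Fintype.card (V m) : ℝ)|)
        atTop (nhds 2) := by
  intro ε₀ hε₀ x k hk
  have hq2 : (2:ℝ) ≤ (q:ℝ) := by exact_mod_cast hq
  have hq1 : (1:ℝ) < (q:ℝ) := by linarith
  have hd0 : 0 ≤ (((q:ℝ)+1)/((q:ℝ)-1)) := div_nonneg (by linarith) (by linarith)
  by_cases hε1 : 1 ≤ ε₀
  · exfalso
    obtain ⟨m, hm⟩ := (hcard.eventually_ge_atTop 2).exists
    have hLpos : 0 < Real.logb q (Fintype.card (V m)) :=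
      Real.logb_pos hq1 (by exact_mod_cast (by omega : 1 < Fintype.card (V m)))
    have h1 : (1-ε₀) ≤ 0 := by linarith
    have h2 : 0 ≤ (((q:ℝ)+1)/((q:ℝ)-1)) * Real.logb q (Fintype.card (V m)) :=
      mul_nonneg hd0 hLpos.le
    have hle : (1-ε₀) * (((q:ℝ)+1)/((q:ℝ)-1)) * Real.logb q (Fintype.card (V m)) ≤ 0 := by
      rw [mul_assoc]
      exact mul_nonpos_iff.mpr (Or.inr ⟨h1, h2⟩)
    have := hk m
    have hk0 : (0:ℝ) ≤ (k m : ℝ) := Nat.cast_nonneg _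
    linarith
  push_neg at hε1
  -- abbreviations
  have hlam1 : (1:ℝ) ≤ 1 + ε₀/4 := by linarith
  have hδ : (0:ℝ) < ε₀^3/32 := by positivity
  set L : ℕ → ℝ := fun m => Real.logb q (Fintype.card (V m)) with hLdef
  have hLtop : Tendsto L atTop atTop := by
    have h1 : Tendsto (fun m => ((Fintype.card (V m) : ℕ) : ℝ)) atTop atTop :=
      tendsto_natCast_atTop_atTop.comp hcard
    exact (Real.tendsto_logb_atTop hq1).comp h1
  -- the error function
  set W : ℕ → ℝ := fun m =>
    2*((1 + 3*(L m)*(1+ε₀/4)) * (1+ε₀/4) * Real.exp (-(ε₀^3/32)*(L m)))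
      + 2*(4 * ((Fintype.card (V m):ℝ)) ^ (-(ε₀/2):ℝ)) with hWdef
  -- limits
  have hexp : Tendsto (fun y:ℝ => Real.exp (-(ε₀^3/32)*y)) atTop (nhds 0) := by
    have h1 : Tendsto (fun y:ℝ => (ε₀^3/32)*y) atTop atTop :=
      Tendsto.const_mul_atTop hδ tendsto_id
    have h2 := Real.tendsto_exp_atBot.comp (tendsto_neg_atTop_atBot.comp h1)
    convert h2 using 2 with y
    simp [neg_mul, Function.comp]
  have hyexp : Tendsto (fun y:ℝ => y * Real.exp (-(ε₀^3/32)*y)) atTop (nhds 0) := by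
    have h1 : Tendsto (fun y:ℝ => (ε₀^3/32)*y) atTop atTop :=
      Tendsto.const_mul_atTop hδ tendsto_id
    have h2 := (Real.tendsto_pow_mul_exp_neg_atTop_nhds_zero 1).comp h1
    have h3 := h2.const_mul (32/ε₀^3)
    rw [mul_zero] at h3
    convert h3 using 2 with y
    simp only [Function.comp, pow_one]
    rw [neg_mul]
    field_simp
  have hP1 : Tendsto (fun m =>
      (1 + 3*(L m)*(1+ε₀/4)) * (1+ε₀/4) * Real.exp (-(ε₀^3/32)*(L m))) atTop (nhds 0) := by
    have hfr : Tendsto (fun y:ℝ =>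
        (1 + 3*y*(1+ε₀/4)) * (1+ε₀/4) * Real.exp (-(ε₀^3/32)*y)) atTop (nhds 0) := by
      have h4 := (hexp.const_mul (1+ε₀/4)).add (hyexp.const_mul (3*(1+ε₀/4)^2))
      rw [mul_zero, mul_zero, add_zero] at h4
      convert h4 using 2 with y
      ring
    exact hfr.comp hLtop
  have hP2 : Tendsto (fun m => ((Fintype.card (V m):ℝ)) ^ (-(ε₀/2):ℝ)) atTop (nhds 0) := by
    have h1 : Tendsto (fun m => ((Fintype.card (V m) : ℕ) : ℝ)) atTop atTop :=
      tendsto_natCast_atTop_atTop.comp hcard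
    exact (tendsto_rpow_neg_atTop (by positivity : (0:ℝ) < ε₀/2)).comp h1
  have hW0 : Tendsto W atTop (nhds 0) := by
    have h := (hP1.const_mul 2).add ((hP2.const_mul 4).const_mul 2)
    rw [mul_zero, mul_zero, mul_zero, add_zero] at h
    exact h
  -- lower bound eventually
  have hlower : ∀ᶠ m in atTop, 2 - W m ≤ ∑ y,
      |pvec q (G m) (x m) (k m) y - 1 / (Fintype.card (V m) : ℝ)| := by
    filter_upwards [hcard.eventually_ge_atTop 2] with m hm
    have hncard : 1 < Fintype.card (V m) := by omega
    have hnR : (1:ℝ) < (Fintype.card (V m) : ℝ) := by exact_mod_cast hncard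
    have hLpos : 0 < L m := Real.logb_pos hq1 hnR
    have hTV := TV_bounds q hq (G m) (hreg m) (x m) (1+ε₀/4) hlam1 (k m) ⌊(1-ε₀/2) * L m⌋₊
    have hA := errA q hq ε₀ (L m) hε₀ hε1 hLpos (k m) (hk m)
    have hB := errB q hq ε₀ hε₀ hε1 (Fintype.card (V m) : ℝ) hnR
    have h1 := hTV.1
    rw [hWdef]
    simp only []
    linarith
  have hupper : ∀ᶠ m in atTop, (∑ y,
      |pvec q (G m) (x m) (k m) y - 1 / (Fintype.card (V m) : ℝ)|) ≤ 2 := by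
    filter_upwards with m
    exact (TV_bounds q hq (G m) (hreg m) (x m) (1+ε₀/4) hlam1 (k m) 0).2
  have hgoal : (fun m => ∑ y,
      |((((q : ℝ) + 1)⁻¹ • (G m).adjMatrix ℝ) ^ (k m)).mulVec
          (fun z => if z = x m then (1 : ℝ) else 0) y - 1 / (Fintype.card (V m) : ℝ)|)
      = (fun m => ∑ y, |pvec q (G m) (x m) (k m) y - 1 / (Fintype.card (V m) : ℝ)|) := rfl
  rw [hgoal]
  have hg : Tendsto (fun m => 2 - W m) atTop (nhds 2) := by
    have h := hW0.const_sub 2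
    rw [sub_zero] at h
    exact h
  exact tendsto_of_tendsto_of_tendsto_of_le_of_le' hg tendsto_const_nhds hlower hupper
end

section
/- For each prime t > 2 and T ≥ 1, the number of matrices γ ∈ SL₂(ℤ) with γ ≡ I (mod t) and with all entries bounded by T in absolute value is ≪_ε (T/t² + 1)·(T/t + 1)·T^ε for every ε > 0. -/
open Finset


open Finset

lemma perfactor (ε : ℝ) (hε : 0 < ε) (p k : ℕ) (hp : p.Prime) (hk : 1 ≤ k) :
    ((k : ℝ) + 1) ≤ (if (p:ℝ) < 2 ^ (1/ε) then max 1 (1/(ε * Real.log 2)) else 1)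
      * ((p:ℝ) ^ k) ^ ε := by
  have hp2 : (2:ℝ) ≤ p := by exact_mod_cast hp.two_le
  have hppos : (0:ℝ) < p := by linarith
  have hpk : ((p:ℝ)^k)^ε = ((p:ℝ)^ε)^k := by
    rw [← Real.rpow_natCast ((p:ℝ)^ε) k, ← Real.rpow_natCast (p:ℝ) k,
      ← Real.rpow_mul hppos.le, ← Real.rpow_mul hppos.le, mul_comm]
  have hmono : ((2:ℝ)^ε)^k ≤ ((p:ℝ)^ε)^k :=
    pow_le_pow_left₀ (Real.rpow_nonneg (by norm_num) ε)
      (Real.rpow_le_rpow (by norm_num) hp2 hε.le) k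
  by_cases h : (p:ℝ) < 2 ^ (1/ε)
  · simp only [if_pos h, hpk]
    have hlog : (0:ℝ) < Real.log 2 := Real.log_pos (by norm_num)
    set C := max 1 (1/(ε * Real.log 2)) with hC
    have hC1 : (1:ℝ) ≤ C := le_max_left _ _
    have hC2 : 1/(ε * Real.log 2) ≤ C := le_max_right _ _
    have hCe : 1 ≤ C * (ε * Real.log 2) := by
      rw [div_le_iff₀ (by positivity)] at hC2
      linarith
    have hexp : 1 + (k:ℝ) * (ε * Real.log 2) ≤ ((2:ℝ)^ε)^k := by
      have : ((2:ℝ)^ε)^k = Real.exp ((k:ℝ) * (ε * Real.log 2)) := by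
        rw [← Real.rpow_natCast ((2:ℝ)^ε) k, ← Real.rpow_mul (by norm_num),
          Real.rpow_def_of_pos (by norm_num)]
        ring_nf
      rw [this]
      have := Real.add_one_le_exp ((k:ℝ) * (ε * Real.log 2))
      linarith
    calc ((k:ℝ) + 1) ≤ C * (1 + (k:ℝ) * (ε * Real.log 2)) := by
          have hk0 : (1:ℝ) ≤ (k:ℝ) := by exact_mod_cast hk
          nlinarith
      _ ≤ C * ((2:ℝ)^ε)^k := by
          apply mul_le_mul_of_nonneg_left hexp (by linarith)
      _ ≤ C * ((p:ℝ)^ε)^k := mul_le_mul_of_nonneg_left hmono (by linarith)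
  · simp only [if_neg h, hpk, one_mul]
    push_neg at h
    have h2 : (2:ℝ) ≤ (p:ℝ)^ε := by
      calc (2:ℝ) = ((2:ℝ)^(1/ε))^ε := by
            rw [← Real.rpow_mul (by norm_num), one_div_mul_cancel hε.ne', Real.rpow_one]
        _ ≤ (p:ℝ)^ε := Real.rpow_le_rpow (Real.rpow_nonneg (by norm_num) _) h hε.le
    calc ((k:ℝ) + 1) ≤ (2:ℝ)^k := by
          have := Nat.lt_two_pow_self (n := k)
          have : (k:ℝ) + 1 ≤ ((2^k : ℕ) : ℝ) := by exact_mod_cast this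
          simpa using this
      _ ≤ ((p:ℝ)^ε)^k := pow_le_pow_left₀ (by norm_num) h2 k

lemma divisor_bound (ε : ℝ) (hε : 0 < ε) : ∃ C : ℝ, 1 ≤ C ∧
    ∀ n : ℕ, n ≠ 0 → ((n.divisors.card : ℝ)) ≤ C * (n:ℝ)^ε := by
  classical
  set C0 := max 1 (1/(ε * Real.log 2)) with hC0
  have hC01 : (1:ℝ) ≤ C0 := le_max_left _ _
  set N := ⌈(2:ℝ)^(1/ε)⌉₊ with hN
  refine ⟨C0 ^ N, one_le_pow₀ hC01, ?_⟩
  intro n hn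
  have hcard : (n.divisors.card : ℝ) =
      ∏ p ∈ n.primeFactors, ((n.factorization p : ℝ) + 1) := by
    rw [Nat.card_divisors hn]
    push_cast
    rfl
  have hns : ((n:ℝ))^ε = ∏ p ∈ n.primeFactors, ((p:ℝ) ^ (n.factorization p)) ^ ε := by
    have h1 : ((n:ℝ)) = ∏ p ∈ n.primeFactors, ((p:ℝ) ^ n.factorization p) := by
      have := congrArg (Nat.cast : ℕ → ℝ) (Nat.factorization_prod_pow_eq_self hn)
      rw [Finsupp.prod, Nat.support_factorization] at this
      push_cast at this
      exact this.symm
    rw [h1, ← Real.finset_prod_rpow _ _ (fun p _ => by positivity) ε]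
  have hstep : (n.divisors.card : ℝ) ≤
      ∏ p ∈ n.primeFactors, ((if (p:ℝ) < 2 ^ (1/ε) then C0 else 1)
        * ((p:ℝ) ^ (n.factorization p)) ^ ε) := by
    rw [hcard]
    apply Finset.prod_le_prod (fun p _ => by positivity)
    intro p hp
    exact perfactor ε hε p _ (Nat.prime_of_mem_primeFactors hp)
      ((Nat.Prime.factorization_pos_of_dvd (Nat.prime_of_mem_primeFactors hp) hn
        (Nat.dvd_of_mem_primeFactors hp)))
  rw [Finset.prod_mul_distrib] at hstep
  have hifprod : (∏ p ∈ n.primeFactors, (if (p:ℝ) < 2 ^ (1/ε) then C0 else 1)) ≤ C0 ^ N := by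
    rw [Finset.prod_ite, Finset.prod_const, Finset.prod_const, one_pow, mul_one]
    apply pow_le_pow_right₀ (by linarith)
    calc _ ≤ (Finset.range N).card := by
            apply Finset.card_le_card
            intro p hp
            simp only [Finset.mem_filter] at hp
            rw [Finset.mem_range]
            exact Nat.lt_ceil.mpr hp.2
      _ = N := Finset.card_range N
  calc (n.divisors.card : ℝ) ≤ _ := hstep
    _ ≤ C0 ^ N * ((n:ℝ))^ε := by
        rw [hns]
        exact mul_le_mul_of_nonneg_right hifprod (by positivity)

open Finset

lemma count_res (T' r v : ℤ) (hT : 0 ≤ T') (hr : 0 < r) :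
    (((Finset.Icc (-T') T').filter (fun x => r ∣ x - v)).card : ℝ)
      ≤ 2*(T':ℝ)/(r:ℝ) + 2 := by
  have hset : (Finset.Icc (-T') T').filter (fun x => r ∣ x - v)
      = {x ∈ Finset.Ioc (-T'-1) T' | x ≡ v [ZMOD r]} := by
    ext x
    simp only [Finset.mem_filter, Finset.mem_Icc, Finset.mem_Ioc]
    constructor
    · rintro ⟨⟨h1, h2⟩, h3⟩
      exact ⟨⟨by omega, h2⟩, (Int.modEq_iff_dvd).mpr (dvd_sub_comm.mp h3)⟩
    · rintro ⟨⟨h1, h2⟩, h3⟩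
      exact ⟨⟨by omega, h2⟩, dvd_sub_comm.mp ((Int.modEq_iff_dvd).mp h3)⟩
  have hcard := Int.Ioc_filter_modEq_card (-T'-1) T' hr v
  rw [hset]
  have hrq : (1:ℚ) ≤ (r:ℚ) := by exact_mod_cast hr
  have hrq0 : (0:ℚ) < (r:ℚ) := by linarith
  set x : ℚ := ((T':ℚ) - v) / (r:ℚ) with hx
  set y : ℚ := (((-T'-1 : ℤ):ℚ) - v) / (r:ℚ) with hy
  have hq : ((({x ∈ Finset.Ioc (-T'-1) T' | x ≡ v [ZMOD r]}).card : ℤ) : ℚ)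
      ≤ 2*(T':ℚ)/(r:ℚ) + 2 := by
    rw [hcard]
    have h1 : (⌊x⌋ : ℚ) ≤ x := Int.floor_le x
    have h2 : y - 1 < (⌊y⌋ : ℚ) := Int.sub_one_lt_floor y
    have hxy : x - y = (2*(T':ℚ) + 1) / (r:ℚ) := by
      rw [hx, hy, div_sub_div_same]
      push_cast
      ring_nf
    have hM : ((⌊x⌋ - ⌊y⌋ : ℤ) : ℚ) ≤ 2*(T':ℚ)/(r:ℚ) + 2 := by
      have : ((⌊x⌋ - ⌊y⌋ : ℤ) : ℚ) ≤ x - y + 1 := by push_cast; linarith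
      rw [hxy] at this
      have h1r : (1:ℚ)/(r:ℚ) ≤ 1 := by
        rw [div_le_one hrq0]; exact hrq
      have : (2*(T':ℚ) + 1) / (r:ℚ) = 2*(T':ℚ)/(r:ℚ) + 1/(r:ℚ) := by ring
      linarith [this ▸ hxy]
    have hnn : (0:ℚ) ≤ 2*(T':ℚ)/(r:ℚ) + 2 := by
      have : (0:ℚ) ≤ (T':ℚ) := by exact_mod_cast hT
      positivity
    push_cast
    exact max_le (by push_cast at hM; exact hM) hnn
  have := (Rat.cast_le (K := ℝ)).mpr hq
  push_cast at this ⊢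
  convert this using 2 <;> norm_num

lemma step1_lemma (t : ℕ) (T : ℝ) (T' : ℤ) (hfl : T' = ⌊T⌋) :
    (({γ : Matrix.SpecialLinearGroup (Fin 2) ℤ |
          (∀ i j, |(γ.1 i j : ℝ)| ≤ T) ∧
          (∀ i j, ((γ.1 i j : ZMod t) = (1 : Matrix (Fin 2) (Fin 2) (ZMod t)) i j))}).ncard : ℝ)
      ≤ (((((Finset.Icc (-T') T') ×ˢ (Finset.Icc (-T') T')) ×ˢ ((Finset.Icc (-T') T') ×ˢ (Finset.Icc (-T') T'))).filter (fun q =>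
      q.1.1 * q.2.2 - q.1.2 * q.2.1 = 1 ∧ (t:ℤ) ∣ q.1.1 - 1 ∧ (t:ℤ) ∣ q.1.2 ∧
        (t:ℤ) ∣ q.2.1 ∧ (t:ℤ) ∣ q.2.2 - 1)).card : ℝ) := by
  classical
  set S := {γ : Matrix.SpecialLinearGroup (Fin 2) ℤ |
          (∀ i j, |(γ.1 i j : ℝ)| ≤ T) ∧
          (∀ i j, ((γ.1 i j : ZMod t) = (1 : Matrix (Fin 2) (Fin 2) (ZMod t)) i j))} with hS
  set f : Matrix.SpecialLinearGroup (Fin 2) ℤ → (ℤ × ℤ) × ℤ × ℤ :=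
    fun γ => ((γ.1 0 0, γ.1 0 1), (γ.1 1 0, γ.1 1 1)) with hf
  have hinj : Function.Injective f := by
    intro γ γ' h
    simp only [hf, Prod.mk.injEq] at h
    ext i j
    fin_cases i <;> fin_cases j <;> tauto
  set G := ((((Finset.Icc (-T') T') ×ˢ (Finset.Icc (-T') T')) ×ˢ ((Finset.Icc (-T') T') ×ˢ (Finset.Icc (-T') T'))).filter (fun q =>
      q.1.1 * q.2.2 - q.1.2 * q.2.1 = 1 ∧ (t:ℤ) ∣ q.1.1 - 1 ∧ (t:ℤ) ∣ q.1.2 ∧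
        (t:ℤ) ∣ q.2.1 ∧ (t:ℤ) ∣ q.2.2 - 1)) with hGd
  have hsub : f '' S ⊆ ↑G := by
    rintro _ ⟨γ, hγ, rfl⟩
    obtain ⟨hbd, hcong⟩ := hγ
    have hmem : ∀ i j, γ.1 i j ∈ Finset.Icc (-T') T' := by
      intro i j
      have h := abs_le.mp (hbd i j)
      rw [Finset.mem_Icc, hfl]
      constructor
      · have : (-T : ℝ) ≤ (γ.1 i j : ℝ) := h.1
        have h2 : ((-γ.1 i j : ℤ) : ℝ) ≤ T := by push_cast; linarith
        have := Int.le_floor.mpr h2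
        omega
      · exact Int.le_floor.mpr h.2
    have hdvd1 : ∀ i, (t:ℤ) ∣ γ.1 i i - 1 := by
      intro i
      have h := hcong i i
      rw [Matrix.one_apply_eq] at h
      have : ((γ.1 i i - 1 : ℤ) : ZMod t) = 0 := by push_cast [h]; ring
      exact_mod_cast (ZMod.intCast_zmod_eq_zero_iff_dvd _ t).mp this
    have hdvd0 : ∀ i j, i ≠ j → (t:ℤ) ∣ γ.1 i j := by
      intro i j hij
      have h := hcong i j
      rw [Matrix.one_apply_ne hij] at h
      exact_mod_cast (ZMod.intCast_zmod_eq_zero_iff_dvd _ t).mp h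
    have hdet : γ.1 0 0 * γ.1 1 1 - γ.1 0 1 * γ.1 1 0 = 1 := by
      have := γ.2
      rwa [Matrix.det_fin_two] at this
    simp only [hGd, Finset.coe_filter, Set.mem_setOf_eq, Finset.mem_product]
    exact ⟨⟨⟨hmem 0 0, hmem 0 1⟩, hmem 1 0, hmem 1 1⟩, hdet, hdvd1 0,
      hdvd0 0 1 (by decide), hdvd0 1 0 (by decide), hdvd1 1⟩
  calc (S.ncard : ℝ) = ((f '' S).ncard : ℝ) := by rw [Set.ncard_image_of_injective _ hinj]
    _ ≤ ((↑G : Set ((ℤ × ℤ) × ℤ × ℤ)).ncard : ℝ) := by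
        exact_mod_cast Nat.cast_le.mpr (Set.ncard_le_ncard hsub G.finite_toSet)
    _ = (G.card : ℝ) := by rw [Set.ncard_coe_finset]

lemma step2_lemma (t : ℕ) (T : ℝ) (T' : ℤ) (hT'0 : 0 ≤ T') (hT'le : (T':ℝ) ≤ T)
    (htz : (0:ℤ) < (t:ℤ)) (ht0 : (0:ℝ) < (t:ℝ)) (G2 : Finset ((ℤ × ℤ) × ℤ × ℤ))
    (hmem : ∀ q ∈ G2, (q.1.1 ∈ Finset.Icc (-T') T' ∧ q.1.2 ∈ Finset.Icc (-T') T' ∧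
        q.2.1 ∈ Finset.Icc (-T') T' ∧ q.2.2 ∈ Finset.Icc (-T') T') ∧
      (q.1.1 * q.2.2 - q.1.2 * q.2.1 = 1) ∧ ((t:ℤ) ∣ q.1.2) ∧ ((t:ℤ) ∣ q.2.1) ∧
      (q.1.2 * q.2.1 = 0)) :
    (G2.card : ℝ) ≤ 16 * (T / t + 1) := by
  classical
  set Vt : Finset ℤ := (Finset.Icc (-(2*T')) (2*T')).filter (fun x => (t:ℤ) ∣ x - 0) with hVt
  set H : Finset ((ℤ × ℤ) × Bool) := (({1,-1} : Finset ℤ) ×ˢ Vt) ×ˢ Finset.univ with hH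
  have hcle : G2.card ≤ H.card := by
    apply Finset.card_le_card_of_injOn
      (fun q => ((q.1.1, q.1.2 + q.2.1), decide (q.1.2 = 0)))
    · intro q hq
      obtain ⟨⟨ha, hb, hc, hd⟩, hdet, hdb, hdc, hbc0⟩ := hmem q hq
      rw [Finset.mem_Icc] at ha hb hc hd
      have had : q.1.1 * q.2.2 = 1 := by omega
      have haunit : q.1.1 = 1 ∨ q.1.1 = -1 :=
        Int.isUnit_iff.mp (IsUnit.of_mul_eq_one _ had)
      simp only [Finset.mem_coe, hH, hVt, Finset.mem_product, Finset.mem_univ, and_true,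
        Finset.mem_filter, Finset.mem_Icc, Finset.mem_insert, Finset.mem_singleton]
      exact ⟨by tauto, ⟨by omega, by omega⟩, by simpa using dvd_add hdb hdc⟩
    · intro q hq q' hq' heq
      obtain ⟨_, hdet, _, _, hbc⟩ := hmem q hq
      obtain ⟨_, hdet', _, _, hbc'⟩ := hmem q' hq'
      simp only [Prod.mk.injEq, decide_eq_decide] at heq
      obtain ⟨⟨ha, hs⟩, hflag⟩ := heq
      have hbb : q.1.2 = q'.1.2 ∧ q.2.1 = q'.2.1 := by
        rcases mul_eq_zero.mp hbc with h0 | h0 <;> rcases mul_eq_zero.mp hbc' with h0' | h0' <;>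
          constructor <;> omega
      have ha0 : q.1.1 ≠ 0 := by
        intro h
        rw [h] at hdet
        omega
      have hd : q.2.2 = q'.2.2 := by
        apply mul_left_cancel₀ ha0
        rw [hbc] at hdet
        rw [hbc', ← ha] at hdet'
        omega
      exact Prod.ext (Prod.ext ha hbb.1) (Prod.ext hbb.2 hd)
  have hVcard : ((Vt.card : ℝ)) ≤ 2*(2*(T':ℝ))/(t:ℝ) + 2 := by
    have := count_res (2*T') (t:ℤ) 0 (by omega) htz
    push_cast at this ⊢
    convert this using 3
  have hHcard : (H.card : ℝ) ≤ 2 * (Vt.card) * 2 := by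
    rw [hH, Finset.card_product, Finset.card_product]
    have h12 : ({1,-1} : Finset ℤ).card ≤ 2 := Finset.card_insert_le _ _ |>.trans (by simp)
    have h12' : (({1,-1} : Finset ℤ).card : ℝ) ≤ 2 := by exact_mod_cast h12
    have hb : ((Finset.univ : Finset Bool).card : ℝ) = 2 := by simp
    push_cast
    rw [hb]
    have : (0:ℝ) ≤ (Vt.card : ℝ) := by positivity
    nlinarith
  have hTt : (T':ℝ)/(t:ℝ) ≤ T/(t:ℝ) := by gcongr
  calc (G2.card : ℝ) ≤ (H.card : ℝ) := by exact_mod_cast hcle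
    _ ≤ 2 * (Vt.card) * 2 := hHcard
    _ ≤ 2 * (2*(2*(T':ℝ))/(t:ℝ) + 2) * 2 := by nlinarith [Nat.cast_nonneg (α := ℝ) Vt.card]
    _ ≤ 16 * (T / t + 1) := by
        have h2 : 2*(2*(T':ℝ))/(t:ℝ) = 4 * ((T':ℝ)/(t:ℝ)) := by ring
        rw [h2]
        nlinarith

lemma step3_lemma (ε : ℝ) (hε : 0 < ε) (C₁ : ℝ) (hC₁1 : 1 ≤ C₁)
    (hC₁ : ∀ n : ℕ, n ≠ 0 → ((n.divisors.card : ℝ)) ≤ C₁ * (n:ℝ)^(ε/4))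
    (t : ℕ) (T : ℝ) (hT : 1 ≤ T) (T' : ℤ) (hT'0 : 0 ≤ T') (hT'le : (T':ℝ) ≤ T)
    (htz : (0:ℤ) < (t:ℤ)) (ht0 : (0:ℝ) < (t:ℝ))
    (G1 : Finset ((ℤ × ℤ) × ℤ × ℤ))
    (hmem : ∀ q ∈ G1, (q.1.1 ∈ Finset.Icc (-T') T' ∧ q.1.2 ∈ Finset.Icc (-T') T' ∧
        q.2.1 ∈ Finset.Icc (-T') T' ∧ q.2.2 ∈ Finset.Icc (-T') T') ∧
      (q.1.1 * q.2.2 - q.1.2 * q.2.1 = 1) ∧ ((t:ℤ) ∣ q.1.1 - 1) ∧ ((t:ℤ) ∣ q.1.2) ∧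
      ((t:ℤ) ∣ q.2.1) ∧ ((t:ℤ) ∣ q.2.2 - 1) ∧ q.1.2 * q.2.1 ≠ 0) :
    (G1.card : ℝ) ≤ (8 * C₁ * (2:ℝ)^(ε/4)) * (T/(t:ℝ)^2 + 1) * (T/t + 1) * T^ε := by
  classical
  have hT0 : (0:ℝ) < T := by linarith
  set AD : Finset (ℤ × ℤ) := ((Finset.Icc (-T') T') ×ˢ (Finset.Icc (-T') T')).filter
    (fun p => (t:ℤ) ∣ p.1 - 1 ∧ ((t:ℤ)^2) ∣ p.1 + p.2 - 2) with hAD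
  set D : ℝ := 2 * C₁ * (2*T^2)^(ε/4) with hD
  have hD0 : 0 ≤ D := by positivity
  set n : ℕ := ⌊D⌋₊ with hn
  -- the map to (a, d)
  have hmaps : ∀ q ∈ G1, (q.1.1, q.2.2) ∈ AD := by
    intro q hq
    obtain ⟨⟨ha, hb, hc, hd⟩, hdet, hda, hdb, hdc, hdd, hbc⟩ := hmem q hq
    rw [hAD, Finset.mem_filter, Finset.mem_product]
    refine ⟨⟨ha, hd⟩, hda, ?_⟩
    have h1 : (t:ℤ)^2 ∣ q.1.2 * q.2.1 := by
      rw [sq]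
      exact mul_dvd_mul hdb hdc
    have h2 : (t:ℤ)^2 ∣ (q.1.1 - 1) * (q.2.2 - 1) := by
      rw [sq]
      exact mul_dvd_mul hda hdd
    have h3 : q.1.1 + q.2.2 - 2 = q.1.2 * q.2.1 - (q.1.1 - 1) * (q.2.2 - 1) := by
      linear_combination hdet
    rw [h3]
    exact dvd_sub h1 h2
  -- fiber bound via divisors
  have hfiber : ∀ p ∈ AD, (G1.filter (fun q => (q.1.1, q.2.2) = p)).card ≤ n := by
    intro p hp
    rcases Finset.eq_empty_or_nonempty (G1.filter (fun q => (q.1.1, q.2.2) = p)) with he | hne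
    · simp [he]
    obtain ⟨q₀, hq₀⟩ := hne
    rw [Finset.mem_filter] at hq₀
    obtain ⟨hq₀1, hq₀2⟩ := hq₀
    obtain ⟨_, hdet₀, _, _, _, _, hbc₀⟩ := hmem q₀ hq₀1
    set m : ℕ := (p.1 * p.2 - 1).natAbs with hm
    have hmne : m ≠ 0 := by
      have : q₀.1.1 = p.1 ∧ q₀.2.2 = p.2 := by
        rw [Prod.ext_iff] at hq₀2
        simpa using hq₀2
      have hbceq : q₀.1.2 * q₀.2.1 = p.1 * p.2 - 1 := by
        rw [← this.1, ← this.2]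
        omega
      simp only [hm, ne_eq, Int.natAbs_eq_zero]
      omega
    -- m ≤ 2 T^2
    have hmle : (m:ℝ) ≤ 2*T^2 := by
      rw [hAD, Finset.mem_filter, Finset.mem_product, Finset.mem_Icc, Finset.mem_Icc] at hp
      obtain ⟨⟨⟨h1, h2⟩, h3, h4⟩, _⟩ := hp
      have habs : (m:ℤ) ≤ T' * T' + 1 := by
        have hx1 : -(T' * T' + 1) ≤ p.1 * p.2 - 1 := by nlinarith
        have hx2 : p.1 * p.2 - 1 ≤ T' * T' + 1 := by nlinarith
        have heq : ((p.1 * p.2 - 1).natAbs : ℤ) = |p.1 * p.2 - 1| := (Int.abs_eq_natAbs _).symm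
        rw [hm, heq, abs_le]
        exact ⟨hx1, hx2⟩
      have hcast : ((m:ℤ):ℝ) ≤ ((T' * T' + 1 : ℤ):ℝ) := by exact_mod_cast habs
      push_cast at hcast
      have hT'r : (0:ℝ) ≤ (T':ℝ) := by exact_mod_cast hT'0
      nlinarith [hcast, hT'le, hT, hT'r]
    -- fiber injects into divisors × Bool
    have hcard2 : (G1.filter (fun q => (q.1.1, q.2.2) = p)).card ≤ 2 * m.divisors.card := by
      have := Finset.card_le_card_of_injOn
        (s := G1.filter (fun q => (q.1.1, q.2.2) = p))
        (t := m.divisors ×ˢ (Finset.univ : Finset Bool))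
        (fun q : (ℤ × ℤ) × ℤ × ℤ => (q.1.2.natAbs, decide (0 < q.1.2))) ?_ ?_
      · calc _ ≤ (m.divisors ×ˢ (Finset.univ : Finset Bool)).card := this
          _ = 2 * m.divisors.card := by
              rw [Finset.card_product]
              simp [mul_comm]
      · intro q hq
        rw [Finset.mem_coe, Finset.mem_filter] at hq
        obtain ⟨hq1, hq2⟩ := hq
        obtain ⟨_, hdet, _, _, _, _, hbc⟩ := hmem q hq1
        rw [Prod.ext_iff] at hq2
        simp only at hq2
        have hbdvd : q.1.2 ∣ (p.1 * p.2 - 1) := by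
          refine ⟨q.2.1, ?_⟩
          rw [← hq2.1, ← hq2.2]
          omega
        rw [Finset.mem_coe, Finset.mem_product]
        refine ⟨?_, Finset.mem_univ _⟩
        rw [Nat.mem_divisors]
        exact ⟨Int.natAbs_dvd_natAbs.mpr hbdvd, hmne⟩
      · intro q hq q' hq' heq
        simp only [Finset.coe_filter, Set.mem_setOf_eq] at hq hq'
        obtain ⟨hq1, hq2⟩ := hq
        obtain ⟨hq'1, hq'2⟩ := hq'
        obtain ⟨_, hdet, _, _, _, _, hbc⟩ := hmem q hq1
        obtain ⟨_, hdet', _, _, _, _, hbc'⟩ := hmem q' hq'1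
        simp only [Prod.mk.injEq, decide_eq_decide] at heq
        have hb : q.1.2 = q'.1.2 := by omega
        rw [Prod.ext_iff] at hq2 hq'2
        simp only at hq2 hq'2
        have hb0 : q.1.2 ≠ 0 := fun h => hbc (by rw [h]; ring)
        have hc : q.2.1 = q'.2.1 := by
          apply mul_left_cancel₀ hb0
          have e1 : q.1.2 * q.2.1 = p.1 * p.2 - 1 := by
            rw [← hq2.1, ← hq2.2]; omega
          have e2 : q'.1.2 * q'.2.1 = p.1 * p.2 - 1 := by
            rw [← hq'2.1, ← hq'2.2]; omega
          have e2' : q.1.2 * q'.2.1 = p.1 * p.2 - 1 := by rw [hb]; exact e2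
          rw [e1, e2']
        exact Prod.ext (Prod.ext (hq2.1.trans hq'2.1.symm) hb) (Prod.ext hc (hq2.2.trans hq'2.2.symm))
    -- divisors bound
    have hdiv : (2 * m.divisors.card : ℝ) ≤ D := by
      have h1 := hC₁ m hmne
      have h2 : ((m:ℝ))^(ε/4) ≤ (2*T^2)^(ε/4) :=
        Real.rpow_le_rpow (Nat.cast_nonneg m) hmle (by linarith)
      rw [hD]
      nlinarith [Real.rpow_nonneg (Nat.cast_nonneg m : (0:ℝ) ≤ (m:ℝ)) (ε/4)]
    apply Nat.le_floor
    calc ((G1.filter (fun q => (q.1.1, q.2.2) = p)).card : ℝ)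
        ≤ ((2 * m.divisors.card : ℕ) : ℝ) := by exact_mod_cast hcard2
      _ ≤ D := by push_cast; exact_mod_cast hdiv
  have hG1AD : G1.card ≤ n * AD.card :=
    Finset.card_le_mul_card_image_of_maps_to hmaps n hfiber
  -- bound AD.card
  set Ma : Finset ℤ := (Finset.Icc (-T') T').filter (fun a => (t:ℤ) ∣ a - 1) with hMa
  set n₂ : ℕ := ⌊2*(T':ℝ)/((t:ℝ)^2) + 2⌋₊ with hn₂
  have hADle : AD.card ≤ n₂ * Ma.card := by
    apply Finset.card_le_mul_card_image_of_maps_to (f := Prod.fst)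
    · intro p hp
      rw [hAD, Finset.mem_filter, Finset.mem_product] at hp
      rw [hMa, Finset.mem_filter]
      exact ⟨hp.1.1, hp.2.1⟩
    · intro a _
      set Md : Finset ℤ := (Finset.Icc (-T') T').filter (fun d => ((t:ℤ)^2) ∣ d - (2 - a)) with hMd
      have hsub : (AD.filter (fun p => p.1 = a)).card ≤ Md.card := by
        apply Finset.card_le_card_of_injOn Prod.snd
        · intro p hp
          rw [Finset.mem_coe, Finset.mem_filter, hAD, Finset.mem_filter, Finset.mem_product] at hp
          rw [Finset.mem_coe, hMd, Finset.mem_filter]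
          refine ⟨hp.1.1.2, ?_⟩
          have := hp.1.2.2
          rw [hp.2] at this
          convert this using 1
          ring
        · intro p hp p' hp' heq
          simp only [Finset.coe_filter, Set.mem_setOf_eq] at hp hp'
          exact Prod.ext (hp.2.trans hp'.2.symm) heq
      have hMdle : (Md.card : ℝ) ≤ 2*(T':ℝ)/((t:ℝ)^2) + 2 := by
        have := count_res T' ((t:ℤ)^2) (2 - a) hT'0 (by positivity)
        push_cast at this ⊢
        exact this
      refine hsub.trans (Nat.le_floor ?_)
      exact hMdle
  have hMale : (Ma.card : ℝ) ≤ 2*(T':ℝ)/(t:ℝ) + 2 := by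
    have := count_res T' (t:ℤ) 1 hT'0 htz
    push_cast at this ⊢
    exact this
  -- assemble
  have hnD : (n:ℝ) ≤ D := Nat.floor_le hD0
  have hn₂r : ((n₂:ℕ):ℝ) ≤ 2*(T':ℝ)/((t:ℝ)^2) + 2 := Nat.floor_le (by positivity)
  have hDle : D ≤ 2 * C₁ * (2:ℝ)^(ε/4) * T^ε := by
    rw [hD]
    have h1 : (2*T^2)^(ε/4) = (2:ℝ)^(ε/4) * (T^2)^(ε/4) :=
      Real.mul_rpow (by norm_num) (by positivity)
    have h2 : ((T^2):ℝ)^(ε/4) = T^(ε/2) := by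
      rw [← Real.rpow_natCast T 2, ← Real.rpow_mul hT0.le]
      norm_num
      ring_nf
    have h3 : T^(ε/2) ≤ T^ε := Real.rpow_le_rpow_of_exponent_le hT (by linarith)
    rw [h1, h2]
    calc 2 * C₁ * ((2:ℝ)^(ε/4) * T^(ε/2)) = (2 * C₁ * (2:ℝ)^(ε/4)) * T^(ε/2) := by ring
      _ ≤ (2 * C₁ * (2:ℝ)^(ε/4)) * T^ε := mul_le_mul_of_nonneg_left h3 (by positivity)
  have hw : (0:ℝ) ≤ T/(t:ℝ)^2 + 1 := by positivity
  have hu : (0:ℝ) ≤ T/t + 1 := by positivity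
  have hfn2 : ((n₂:ℕ):ℝ) ≤ 2 * (T/(t:ℝ)^2 + 1) := by
    have : (T':ℝ)/((t:ℝ)^2) ≤ T/((t:ℝ)^2) := by gcongr
    calc ((n₂:ℕ):ℝ) ≤ 2*(T':ℝ)/((t:ℝ)^2) + 2 := hn₂r
      _ ≤ 2 * (T/(t:ℝ)^2 + 1) := by
          have h5 : 2*(T':ℝ)/((t:ℝ)^2) = 2 * ((T':ℝ)/((t:ℝ)^2)) := by ring
          rw [h5]
          linarith
  have hfMa : (Ma.card : ℝ) ≤ 2 * (T/t + 1) := by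
    have : (T':ℝ)/(t:ℝ) ≤ T/(t:ℝ) := by gcongr
    calc (Ma.card : ℝ) ≤ 2*(T':ℝ)/(t:ℝ) + 2 := hMale
      _ ≤ 2 * (T/t + 1) := by
          have h5 : 2*(T':ℝ)/(t:ℝ) = 2 * ((T':ℝ)/(t:ℝ)) := by ring
          rw [h5]
          linarith
  calc (G1.card : ℝ) ≤ (n : ℝ) * ((n₂ : ℝ) * (Ma.card : ℝ)) := by
        have : (G1.card : ℝ) ≤ ((n * (n₂ * Ma.card) : ℕ) : ℝ) := by
          exact_mod_cast hG1AD.trans (Nat.mul_le_mul_left n hADle)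
        push_cast at this
        linarith
    _ ≤ D * (2 * (T/(t:ℝ)^2 + 1) * (2 * (T/t + 1))) := by
        apply mul_le_mul hnD _ (by positivity) hD0
        apply mul_le_mul hfn2 hfMa (Nat.cast_nonneg _) (by positivity)
    _ ≤ (2 * C₁ * (2:ℝ)^(ε/4) * T^ε) * (2 * (T/(t:ℝ)^2 + 1) * (2 * (T/t + 1))) := by
        apply mul_le_mul_of_nonneg_right hDle (by positivity)
    _ = (8 * C₁ * (2:ℝ)^(ε/4)) * (T/(t:ℝ)^2 + 1) * (T/t + 1) * T^ε := by ring


/-- For each prime `t > 2` and `T ≥ 1`, the number of `γ ∈ SL₂(ℤ)` with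
`γ ≡ I (mod t)` and all entries bounded by `T` in absolute value is
`≪_ε (T/t² + 1)(T/t + 1) T^ε`, with the implied constant depending only on `ε`. -/
theorem stmt14 : ∀ ε : ℝ, 0 < ε → ∃ C : ℝ, 0 < C ∧
    ∀ t : ℕ, t.Prime → 2 < t → ∀ T : ℝ, 1 ≤ T →
      (({γ : Matrix.SpecialLinearGroup (Fin 2) ℤ |
          (∀ i j, |(γ.1 i j : ℝ)| ≤ T) ∧
          (∀ i j, ((γ.1 i j : ZMod t) = (1 : Matrix (Fin 2) (Fin 2) (ZMod t)) i j))}).ncard : ℝ)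
        ≤ C * (T / (t : ℝ) ^ 2 + 1) * (T / (t : ℝ) + 1) * T ^ ε := by
  classical
  intro ε hε
  obtain ⟨C₁, hC₁1, hC₁⟩ := divisor_bound (ε/4) (by linarith)
  refine ⟨8 * C₁ * (2:ℝ) ^ (ε/4) + 16, by positivity, ?_⟩
  intro t htp ht2 T hT
  set T' : ℤ := ⌊T⌋ with hT'
  have hT'1 : 1 ≤ T' := by rwa [hT', Int.le_floor, Int.cast_one]
  have hT'0 : 0 ≤ T' := by omega
  have hT'le : (T' : ℝ) ≤ T := Int.floor_le T
  have ht0 : (0:ℝ) < t := by positivity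
  have ht1 : (1:ℝ) ≤ t := by exact_mod_cast htp.one_lt.le
  have htz : (0:ℤ) < (t:ℤ) := by exact_mod_cast htp.pos
  set M : Finset ℤ := Finset.Icc (-T') T' with hM
  set G : Finset ((ℤ × ℤ) × ℤ × ℤ) :=
    ((M ×ˢ M) ×ˢ (M ×ˢ M)).filter (fun q =>
      q.1.1 * q.2.2 - q.1.2 * q.2.1 = 1 ∧ (t:ℤ) ∣ q.1.1 - 1 ∧ (t:ℤ) ∣ q.1.2 ∧
        (t:ℤ) ∣ q.2.1 ∧ (t:ℤ) ∣ q.2.2 - 1) with hG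
  -- Step 1: the set injects into G
  have step1 : (({γ : Matrix.SpecialLinearGroup (Fin 2) ℤ |
          (∀ i j, |(γ.1 i j : ℝ)| ≤ T) ∧
          (∀ i j, ((γ.1 i j : ZMod t) = (1 : Matrix (Fin 2) (Fin 2) (ZMod t)) i j))}).ncard : ℝ)
      ≤ (G.card : ℝ) := by
    rw [hG, hM]
    exact step1_lemma t T T' hT'
  -- split G by whether b*c = 0
  set P : ((ℤ × ℤ) × ℤ × ℤ) → Prop := fun q => q.1.2 * q.2.1 = 0 with hP
  have hsplit : G.card = (G.filter P).card + (G.filter (fun q => ¬ P q)).card :=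
    (Finset.card_filter_add_card_filter_not (p := P)).symm
  -- Step 2: b*c = 0 part
  have step2 : ((G.filter P).card : ℝ) ≤ 16 * (T / t + 1) := by
    apply step2_lemma t T T' hT'0 hT'le htz ht0
    intro q hq
    rw [Finset.mem_filter, hG, Finset.mem_filter, Finset.mem_product, Finset.mem_product,
      Finset.mem_product] at hq
    obtain ⟨⟨⟨⟨ha, hb⟩, hc, hd⟩, hdet, hda, hdb, hdc, hdd⟩, hbc⟩ := hq
    exact ⟨⟨ha, hb, hc, hd⟩, hdet, hdb, hdc, hbc⟩
  -- Step 3: b*c ≠ 0 part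
  have step3 : ((G.filter (fun q => ¬ P q)).card : ℝ)
      ≤ (8 * C₁ * (2:ℝ) ^ (ε/4)) * (T / (t:ℝ)^2 + 1) * (T / t + 1) * T ^ ε := by
    apply step3_lemma ε hε C₁ hC₁1 hC₁ t T hT T' hT'0 hT'le htz ht0
    intro q hq
    rw [Finset.mem_filter, hG, Finset.mem_filter, Finset.mem_product, Finset.mem_product,
      Finset.mem_product] at hq
    obtain ⟨⟨⟨⟨ha, hb⟩, hc, hd⟩, hdet, hda, hdb, hdc, hdd⟩, hbc⟩ := hq
    exact ⟨⟨ha, hb, hc, hd⟩, hdet, hda, hdb, hdc, hdd, hbc⟩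
  -- assemble
  have hu : (1:ℝ) ≤ T / t + 1 := le_add_of_nonneg_left (by positivity)
  have hw : (1:ℝ) ≤ T / (t:ℝ)^2 + 1 := le_add_of_nonneg_left (by positivity)
  have hE : (1:ℝ) ≤ T ^ ε := Real.one_le_rpow hT hε.le
  calc _ ≤ (G.card : ℝ) := step1
    _ = ((G.filter P).card : ℝ) + ((G.filter (fun q => ¬ P q)).card : ℝ) := by
        rw [hsplit]; push_cast; ring
    _ ≤ 16 * (T / t + 1) + (8 * C₁ * (2:ℝ) ^ (ε/4)) * (T / (t:ℝ)^2 + 1) * (T / t + 1) * T ^ ε :=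
        add_le_add step2 step3
    _ ≤ _ := by nlinarith [mul_le_mul_of_nonneg_left (mul_le_mul hw hu (by linarith) (by linarith)) (by positivity : (0:ℝ) ≤ 16), hE]
end
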